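/- arXiv:math/0701059 — 3 statements merged into one kernel-verified Lean document; each statement's English description precedes it below -/
import Mathlib

section
/- Let M be a set of gauges in ℝ^N that is closed in the Hausdorff metric and satisfies: conv(K ∪ L) ∈ M and K ∩ L ∈ M for all K, L ∈ M, and α·K ∈ M for every K ∈ M and every real α ≥ 0. Then M is a cone; in particular, K + L ∈ M (Minkowski sum) for all K, L ∈ M. -/
open Pointwise

/-- The support function `h_K(x) = sup{⟨x, y⟩ : y ∈ K}` of `K ⊆ ℝ^N`. -/
noncomputable def suppFn {N : ℕ} (K : Set (EuclideanSpace ℝ (Fin N)))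
    (x : EuclideanSpace ℝ (Fin N)) : ℝ :=
  sSup ((fun y => (inner ℝ x y : ℝ)) '' K)

/-- A gauge in `ℝ^N`: a compact convex set containing the origin. -/
def IsGauge {N : ℕ} (K : Set (EuclideanSpace ℝ (Fin N))) : Prop :=
  IsCompact K ∧ Convex ℝ K ∧ (0 : EuclideanSpace ℝ (Fin N)) ∈ K

/-- A family of gauges is nondegenerate if `sup_ξ ‖A‖_{S_ξ} < +∞` for every
linear operator `A` on `ℝ^N`, i.e. there is `C` such that for each `ξ` and each
`x ∈ S ξ` the gauge value `‖A x‖_{S ξ} = inf{β > 0 : A x ∈ β • S ξ}` is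
attained below `C`. -/
def Nondegenerate {N : ℕ} {Ξ : Type*}
    (S : Ξ → Set (EuclideanSpace ℝ (Fin N))) : Prop :=
  ∀ A : EuclideanSpace ℝ (Fin N) →ₗ[ℝ] EuclideanSpace ℝ (Fin N),
    ∃ C : ℝ, ∀ ξ, ∀ x ∈ S ξ, ∃ β : ℝ, 0 < β ∧ β ≤ C ∧ A x ∈ β • S ξ

/-- Closedness of a collection of (nonempty compact) subsets of `ℝ^N` in the
topology of the Hausdorff metric. -/
def IsHausdorffClosed {N : ℕ} (C : Set (Set (EuclideanSpace ℝ (Fin N)))) : Prop :=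
  IsClosed {K : TopologicalSpace.NonemptyCompacts (EuclideanSpace ℝ (Fin N)) |
    (K : Set (EuclideanSpace ℝ (Fin N))) ∈ C}

/-- `π↑(F)`: the least Hausdorff-closed cone of gauges containing `F` that is
closed under the join `K ∨ L = conv (K ∪ L)`. -/
def piUp {N : ℕ} (F : Set (Set (EuclideanSpace ℝ (Fin N)))) :
    Set (Set (EuclideanSpace ℝ (Fin N))) :=
  ⋂₀ {C | (∀ K ∈ C, IsGauge K) ∧ IsHausdorffClosed C ∧ F ⊆ C ∧
      (∀ K ∈ C, ∀ L ∈ C, K + L ∈ C) ∧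
      (∀ K ∈ C, ∀ α : ℝ, 0 ≤ α → α • K ∈ C) ∧
      (∀ K ∈ C, ∀ L ∈ C, convexHull ℝ (K ∪ L) ∈ C)}

/-- `π↓(F)`: the least Hausdorff-closed cone of gauges containing `F` that is
closed under the meet `K ∧ L = K ∩ L`. -/
def piDown {N : ℕ} (F : Set (Set (EuclideanSpace ℝ (Fin N)))) :
    Set (Set (EuclideanSpace ℝ (Fin N))) :=
  ⋂₀ {C | (∀ K ∈ C, IsGauge K) ∧ IsHausdorffClosed C ∧ F ⊆ C ∧
      (∀ K ∈ C, ∀ L ∈ C, K + L ∈ C) ∧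
      (∀ K ∈ C, ∀ α : ℝ, 0 ≤ α → α • K ∈ C) ∧
      (∀ K ∈ C, ∀ L ∈ C, K ∩ L ∈ C)}

/-- `π(F)`: the least Hausdorff-closed cone of gauges containing `F` that is
closed under both the join and the meet. -/
def piBoth {N : ℕ} (F : Set (Set (EuclideanSpace ℝ (Fin N)))) :
    Set (Set (EuclideanSpace ℝ (Fin N))) :=
  ⋂₀ {C | (∀ K ∈ C, IsGauge K) ∧ IsHausdorffClosed C ∧ F ⊆ C ∧
      (∀ K ∈ C, ∀ L ∈ C, K + L ∈ C) ∧
      (∀ K ∈ C, ∀ α : ℝ, 0 ≤ α → α • K ∈ C) ∧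
      (∀ K ∈ C, ∀ L ∈ C, convexHull ℝ (K ∪ L) ∈ C) ∧
      (∀ K ∈ C, ∀ L ∈ C, K ∩ L ∈ C)}

/-- **4.3.**  A Hausdorff-closed set of gauges containing the join
`conv (K ∪ L)` and the meet `K ∩ L` of any two of its members and all
nonnegative dilations of its members is a cone: it is closed under Minkowski
addition. -/
theorem closed_lattice_of_gauges_is_cone {N : ℕ}
    (M : Set (Set (EuclideanSpace ℝ (Fin N))))
    (hg : ∀ K ∈ M, IsGauge K)
    (hclosed : IsHausdorffClosed M)
    (hjoin : ∀ K ∈ M, ∀ L ∈ M, convexHull ℝ (K ∪ L) ∈ M)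
    (hmeet : ∀ K ∈ M, ∀ L ∈ M, K ∩ L ∈ M)
    (hsmul : ∀ K ∈ M, ∀ α : ℝ, 0 ≤ α → α • K ∈ M) :
    ∀ K ∈ M, ∀ L ∈ M, K + L ∈ M := by
  intro K hK L hL
  obtain ⟨hKc, hKv, hK0⟩ := hg K hK
  obtain ⟨hLc, hLv, hL0⟩ := hg L hL
  -- enumeration of rationals, clipped to (0,1)
  set e : ℚ ≃ ℕ := Denumerable.eqv ℚ with he
  set lam : ℕ → ℝ := fun n =>
    if (0:ℚ) < e.symm n ∧ e.symm n < 1 then ((e.symm n : ℚ) : ℝ) else 1/2 with hlamdef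
  have hlam : ∀ n, 0 < lam n ∧ lam n < 1 := by
    intro n
    simp only [hlamdef]
    split_ifs with h
    · exact ⟨by exact_mod_cast h.1, by exact_mod_cast h.2⟩
    · norm_num
  have hlamq : ∀ q : ℚ, 0 < q → q < 1 → lam (e q) = (q : ℝ) := by
    intro q h0 h1
    simp only [hlamdef, Equiv.symm_apply_apply]
    rw [if_pos ⟨h0, h1⟩]
  -- the approximating joins
  set Cf : ℕ → Set (EuclideanSpace ℝ (Fin N)) := fun n =>
    convexHull ℝ (((lam n)⁻¹ • K) ∪ ((1 - lam n)⁻¹ • L)) with hCfdef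
  have hCfM : ∀ n, Cf n ∈ M := by
    intro n
    exact hjoin _ (hsmul K hK _ (inv_nonneg.2 (hlam n).1.le)) _
      (hsmul L hL _ (inv_nonneg.2 (by linarith [(hlam n).2])))
  -- K + L is contained in every Cf n
  have hKLC : ∀ n, K + L ⊆ Cf n := by
    intro n x hx
    obtain ⟨a, ha, b, hb, rfl⟩ := hx
    have h1 := (hlam n).1
    have h2 := (hlam n).2
    have hp : (lam n)⁻¹ • a ∈ Cf n :=
      subset_convexHull ℝ _ (Or.inl (Set.smul_mem_smul_set ha))
    have hq : (1 - lam n)⁻¹ • b ∈ Cf n :=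
      subset_convexHull ℝ _ (Or.inr (Set.smul_mem_smul_set hb))
    have hmem := (convex_convexHull ℝ _) hp hq h1.le (by linarith : (0:ℝ) ≤ 1 - lam n)
      (by ring)
    have ha' : lam n • (lam n)⁻¹ • a = a := smul_inv_smul₀ (ne_of_gt h1) a
    have hb' : (1 - lam n) • (1 - lam n)⁻¹ • b = b :=
      smul_inv_smul₀ (by linarith : (1:ℝ) - lam n ≠ 0) b
    rwa [ha', hb'] at hmem
  -- any point in all the Cf n lies in K + L
  have hInter : ∀ y : EuclideanSpace ℝ (Fin N), (∀ n, y ∈ Cf n) → y ∈ K + L := by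
    intro y hy
    by_contra hyn
    have hKLconv : Convex ℝ (K + L) := hKv.add hLv
    have hKLcl : IsClosed (K + L) := (hKc.add hLc).isClosed
    obtain ⟨φ, u, hs, hu⟩ := geometric_hahn_banach_closed_point hKLconv hKLcl hyn
    obtain ⟨a0, ha0, ha0m⟩ := hKc.exists_isMaxOn ⟨0, hK0⟩ φ.continuous.continuousOn
    obtain ⟨b0, hb0, hb0m⟩ := hLc.exists_isMaxOn ⟨0, hL0⟩ φ.continuous.continuousOn
    have h0KL : (0 : (EuclideanSpace ℝ (Fin N))) ∈ K + L := by
      have := Set.add_mem_add hK0 hL0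
      simpa using this
    have hu0 : 0 < u := by
      have := hs 0 h0KL
      simpa using this
    have hfg : φ a0 + φ b0 < u := by
      have := hs (a0 + b0) (Set.add_mem_add ha0 hb0)
      simpa using this
    have hf0 : 0 ≤ φ a0 := by simpa using ha0m hK0
    have hg0 : 0 ≤ φ b0 := by simpa using hb0m hL0
    have h1 : φ a0 / u < 1 - φ b0 / u := by
      rw [lt_sub_iff_add_lt, ← add_div, div_lt_one hu0]
      exact hfg
    obtain ⟨q, hq1, hq2⟩ := exists_rat_btwn h1
    have hq0 : (0:ℚ) < q := by
      have : (0:ℝ) < (q:ℝ) := lt_of_le_of_lt (div_nonneg hf0 hu0.le) hq1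
      exact_mod_cast this
    have hq1' : q < 1 := by
      have : (q:ℝ) < 1 := lt_of_lt_of_le hq2 (by
        have : 0 ≤ φ b0 / u := div_nonneg hg0 hu0.le
        linarith)
      exact_mod_cast this
    set n := e q with hn
    have hlamn : lam n = (q : ℝ) := hlamq q hq0 hq1'
    have hlampos : 0 < lam n := (hlam n).1
    have hlamlt : lam n < 1 := (hlam n).2
    have hfa : φ a0 < lam n * u := by
      rw [hlamn]
      rw [div_lt_iff₀ hu0] at hq1
      exact hq1
    have hgb : φ b0 < (1 - lam n) * u := by
      rw [hlamn]
      have : φ b0 / u < 1 - (q:ℝ) := by linarith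
      rw [div_lt_iff₀ hu0] at this
      linarith [this]
    have hhalf : Cf n ⊆ {z : (EuclideanSpace ℝ (Fin N)) | φ z < u} := by
      apply convexHull_min _ (convex_halfSpace_lt ⟨φ.map_add, φ.map_smul⟩ u)
      rintro z (hz | hz)
      · obtain ⟨a, ha, rfl⟩ := hz
        have : φ ((lam n)⁻¹ • a) = (lam n)⁻¹ * φ a := by
          rw [map_smul]; rfl
        rw [Set.mem_setOf_eq, this]
        calc (lam n)⁻¹ * φ a ≤ (lam n)⁻¹ * φ a0 := by
              exact mul_le_mul_of_nonneg_left (ha0m ha) (inv_nonneg.2 hlampos.le)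
          _ < (lam n)⁻¹ * (lam n * u) := by
              exact mul_lt_mul_of_pos_left hfa (inv_pos.2 hlampos)
          _ = u := by field_simp
      · obtain ⟨b, hb, rfl⟩ := hz
        have h1ln : (0:ℝ) < 1 - lam n := by linarith
        have : φ ((1 - lam n)⁻¹ • b) = (1 - lam n)⁻¹ * φ b := by
          rw [map_smul]; rfl
        rw [Set.mem_setOf_eq, this]
        calc (1 - lam n)⁻¹ * φ b ≤ (1 - lam n)⁻¹ * φ b0 := by
              exact mul_le_mul_of_nonneg_left (hb0m hb) (inv_nonneg.2 h1ln.le)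
          _ < (1 - lam n)⁻¹ * ((1 - lam n) * u) := by
              exact mul_lt_mul_of_pos_left hgb (inv_pos.2 h1ln)
          _ = u := by field_simp
    have : φ y < u := hhalf (hy n)
    linarith
  -- the decreasing sequence of finite intersections
  set T : ℕ → Set (EuclideanSpace ℝ (Fin N)) := fun n => Nat.rec (Cf 0) (fun m Tm => Tm ∩ Cf (m + 1)) n with hTdef
  have hT0 : T 0 = Cf 0 := rfl
  have hTs : ∀ n, T (n + 1) = T n ∩ Cf (n + 1) := fun n => rfl
  have hTM : ∀ n, T n ∈ M := by
    intro n
    induction n with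
    | zero => exact hCfM 0
    | succ m ih => rw [hTs]; exact hmeet _ ih _ (hCfM (m + 1))
  have hTC : ∀ n, T n ⊆ Cf n := by
    intro n
    cases n with
    | zero => exact subset_rfl
    | succ m => rw [hTs]; exact Set.inter_subset_right
  have hTmono : ∀ m n, m ≤ n → T n ⊆ T m := by
    intro m n h
    induction n, h using Nat.le_induction with
    | base => exact subset_rfl
    | succ k hk ih => exact subset_trans (by rw [hTs]; exact Set.inter_subset_left) ih
  have hKLT : ∀ n, K + L ⊆ T n := by
    intro n
    induction n with
    | zero => exact hKLC 0
    | succ m ih => rw [hTs]; exact Set.subset_inter ih (hKLC (m + 1))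
  -- gauge facts about the pieces
  have hTg : ∀ n, IsGauge (T n) := fun n => hg _ (hTM n)
  have hKLcomp : IsCompact (K + L) := hKc.add hLc
  have hKLne : (K + L).Nonempty := ⟨0, by simpa using Set.add_mem_add hK0 hL0⟩
  -- the key approximation claim
  have key : ∀ ε : ℝ, 0 < ε → ∃ Nn : ℕ, ∀ x ∈ T Nn, Metric.infDist x (K + L) ≤ ε := by
    intro ε hε
    by_contra hcon
    push_neg at hcon
    set S : ℕ → Set (EuclideanSpace ℝ (Fin N)) := fun n => T n ∩ {x | ε ≤ Metric.infDist x (K + L)} with hSdef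
    have hScl : ∀ n, IsClosed (S n) :=
      fun n => ((hTg n).1.isClosed).inter
        (isClosed_le continuous_const (Metric.continuous_infDist_pt _))
    have hSne : ∀ n, (S n).Nonempty := by
      intro n
      obtain ⟨x, hx, hx2⟩ := hcon n
      exact ⟨x, hx, le_of_lt hx2⟩
    have hSdec : ∀ n, S (n + 1) ⊆ S n := by
      intro n
      exact Set.inter_subset_inter_left _ (hTmono n (n+1) (Nat.le_succ n))
    have hS0c : IsCompact (S 0) := (hTg 0).1.inter_right
      (isClosed_le continuous_const (Metric.continuous_infDist_pt _))
    obtain ⟨x, hx⟩ := IsCompact.nonempty_iInter_of_sequence_nonempty_isCompact_isClosed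
      S hSdec hSne hS0c hScl
    simp only [Set.mem_iInter] at hx
    have hxKL : x ∈ K + L := hInter x (fun n => hTC n (hx n).1)
    have h0' : Metric.infDist x (K + L) = 0 := Metric.infDist_zero_of_mem hxKL
    have h1' : ε ≤ Metric.infDist x (K + L) := (hx 0).2
    rw [h0'] at h1'
    linarith
  -- package as nonempty compacts and take the Hausdorff limit
  set A : ℕ → TopologicalSpace.NonemptyCompacts (EuclideanSpace ℝ (Fin N)) := fun n =>
    ⟨⟨T n, (hTg n).1⟩, ⟨0, (hTg n).2.2⟩⟩ with hAdef
  set B : TopologicalSpace.NonemptyCompacts (EuclideanSpace ℝ (Fin N)) := ⟨⟨K + L, hKLcomp⟩, hKLne⟩ with hBdef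
  have hTend : Filter.Tendsto A Filter.atTop (nhds B) := by
    rw [Metric.tendsto_atTop]
    intro ε hε
    obtain ⟨Nn, hNn⟩ := key (ε / 2) (half_pos hε)
    refine ⟨Nn, fun n hn => ?_⟩
    have hsub : T n ⊆ T Nn := hTmono Nn n hn
    have hd : dist (A n) B = Metric.hausdorffDist (T n) (K + L) := rfl
    rw [hd]
    have hle : Metric.hausdorffDist (T n) (K + L) ≤ ε / 2 := by
      refine Metric.hausdorffDist_le_of_mem_dist (by positivity) (fun x hx => ?_)
        (fun x hx => ⟨x, hKLT n hx, by simp; positivity⟩)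
      obtain ⟨y, hy, hyd⟩ := hKLcomp.exists_infDist_eq_dist hKLne x
      exact ⟨y, hy, by rw [← hyd]; exact hNn x (hsub hx)⟩
    linarith
  have hmem : B ∈ {X : TopologicalSpace.NonemptyCompacts (EuclideanSpace ℝ (Fin N)) |
      (X : Set (EuclideanSpace ℝ (Fin N))) ∈ M} :=
    hclosed.mem_of_tendsto hTend (Filter.Eventually.of_forall (fun n => hTM n))
  exact hmem
end

section
/- Let H be a set of gauges in ℝ^N that is a cone (closed under Minkowski addition and nonnegative dilation), is closed in the Hausdorff metric, and contains K ∩ L whenever K, L ∈ H. Assume that for every nonzero y ∈ ℝ^N one has h_S(y) > 0 for every nonzero S ∈ H and that the set S_y := ⋂_{S ∈ H, S ≠ {0}} (1/h_S(y))·S is absorbing. Then for all vectors y, x_1, …, x_n ∈ ℝ^N the following are equivalent: (a) Σ_{k=1}^n h_S(x_k) ≥ h_S(y) for every gauge S ∈ H; (b) there exist vectors z_1, …, z_n ∈ ℝ^N with z_1 + ⋯ + z_n = y such that h_S(x_k) ≥ h_S(z_k) for every S ∈ H and every k = 1, …, n. -/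
open Pointwise

namespace SuppAux
variable {N : ℕ}
local notation "E" => EuclideanSpace ℝ (Fin N)

lemma contInner (x : E) : Continuous (fun p : E => (inner ℝ x p : ℝ)) :=
  continuous_const.inner continuous_id

lemma bddAbove_img {T : Set E} (hT : IsCompact T) (x : E) :
    BddAbove ((fun p : E => (inner ℝ x p : ℝ)) '' T) :=
  (hT.image (contInner x)).bddAbove

lemma le_suppFn {T : Set E} (hT : IsCompact T) {p : E} (hp : p ∈ T) (x : E) :
    (inner ℝ x p : ℝ) ≤ suppFn T x :=
  le_csSup (bddAbove_img hT x) ⟨p, hp, rfl⟩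

lemma suppFn_le {T : Set E} (hne : T.Nonempty) {x : E} {c : ℝ}
    (h : ∀ p ∈ T, (inner ℝ x p : ℝ) ≤ c) : suppFn T x ≤ c :=
  csSup_le (hne.image _) (by rintro _ ⟨p, hp, rfl⟩; exact h p hp)

lemma exists_suppFn_eq {T : Set E} (hT : IsCompact T) (hne : T.Nonempty) (x : E) :
    ∃ p ∈ T, suppFn T x = (inner ℝ x p : ℝ) := by
  obtain ⟨p, hp, hmax⟩ := hT.exists_isMaxOn hne (contInner x).continuousOn
  exact ⟨p, hp, le_antisymm (suppFn_le hne hmax) (le_suppFn hT hp x)⟩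

lemma suppFn_nonneg {T : Set E} (hT : IsCompact T) (h0 : (0:E) ∈ T) (x : E) :
    0 ≤ suppFn T x := by
  simpa using le_suppFn hT h0 x

lemma suppFn_zero_vec {T : Set E} (hne : T.Nonempty) : suppFn T (0:E) = 0 := by
  have himg : (fun p : E => (inner ℝ (0:E) p : ℝ)) '' T = {0} := by
    apply Set.eq_singleton_iff_nonempty_unique_mem.2
    exact ⟨(hne.image _), by rintro _ ⟨p, hp, rfl⟩; simp⟩
  rw [suppFn, himg, csSup_singleton]

lemma suppFn_singleton_zero (x : E) : suppFn ({0} : Set E) x = 0 := by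
  simp [suppFn, Set.image_singleton]

lemma suppFn_add_vec {T : Set E} (hT : IsCompact T) (hne : T.Nonempty) (a b : E) :
    suppFn T (a + b) ≤ suppFn T a + suppFn T b := by
  refine suppFn_le hne (fun p hp => ?_)
  rw [inner_add_left]
  exact add_le_add (le_suppFn hT hp a) (le_suppFn hT hp b)

lemma suppFn_sum_le {T : Set E} (hT : IsCompact T) (hne : T.Nonempty)
    {ι : Type*} (s : Finset ι) (f : ι → E) :
    suppFn T (∑ i ∈ s, f i) ≤ ∑ i ∈ s, suppFn T (f i) := by
  classical
  induction s using Finset.induction with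
  | empty => simp [suppFn_zero_vec hne]
  | insert _ _ hx ih =>
    rw [Finset.sum_insert hx, Finset.sum_insert hx]
    exact le_trans (suppFn_add_vec hT hne _ _) (by linarith)

lemma suppFn_smul_vec {T : Set E} (hT : IsCompact T) (hne : T.Nonempty)
    {c : ℝ} (hc : 0 ≤ c) (a : E) : suppFn T (c • a) = c * suppFn T a := by
  obtain ⟨p, hp, hpe⟩ := exists_suppFn_eq hT hne a
  obtain ⟨q, hq, hqe⟩ := exists_suppFn_eq hT hne (c • a)
  refine le_antisymm ?_ ?_
  · rw [hqe, real_inner_smul_left]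
    exact mul_le_mul_of_nonneg_left (le_suppFn hT hq a) hc
  · rw [hpe, ← real_inner_smul_left]
    exact le_suppFn hT hp (c • a)

lemma suppFn_mono {T T' : Set E} (hT' : IsCompact T') (hsub : T ⊆ T')
    (hne : T.Nonempty) (x : E) : suppFn T x ≤ suppFn T' x :=
  suppFn_le hne (fun p hp => le_suppFn hT' (hsub hp) x)

lemma suppFn_set_add {T T' : Set E} (hT : IsCompact T) (hne : T.Nonempty)
    (hT' : IsCompact T') (hne' : T'.Nonempty) (x : E) :
    suppFn (T + T') x = suppFn T x + suppFn T' x := by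
  obtain ⟨p, hp, hpe⟩ := exists_suppFn_eq hT hne x
  obtain ⟨q, hq, hqe⟩ := exists_suppFn_eq hT' hne' x
  refine le_antisymm (suppFn_le (hne.add hne') ?_) ?_
  · rintro r hr
    rw [Set.mem_add] at hr
    obtain ⟨a, ha, b, hb, rfl⟩ := hr
    rw [inner_add_right]
    exact add_le_add (le_suppFn hT ha x) (le_suppFn hT' hb x)
  · rw [hpe, hqe, ← inner_add_right]
    exact le_suppFn (hT.add hT') (Set.add_mem_add hp hq) x

lemma suppFn_smul_set {T : Set E} (hT : IsCompact T) (hne : T.Nonempty)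
    {c : ℝ} (hc : 0 ≤ c) (x : E) : suppFn (c • T) x = c * suppFn T x := by
  obtain ⟨p, hp, hpe⟩ := exists_suppFn_eq hT hne x
  refine le_antisymm (suppFn_le (hne.smul_set) ?_) ?_
  · rintro r hr
    obtain ⟨a, ha, rfl⟩ := hr
    rw [real_inner_smul_right]
    exact mul_le_mul_of_nonneg_left (le_suppFn hT ha x) hc
  · rw [hpe, ← real_inner_smul_right]
    exact le_suppFn (hT.smul c) (Set.smul_mem_smul_set hp) x

lemma suppFn_continuous {T : Set E} (hT : IsCompact T) (hne : T.Nonempty) :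
    Continuous (fun z : E => suppFn T z) := by
  obtain ⟨R, hR⟩ : ∃ R : ℝ, ∀ p ∈ T, ‖p‖ ≤ R := by
    obtain ⟨R, hR⟩ := hT.isBounded.subset_closedBall 0
    exact ⟨R, fun p hp => by simpa using hR hp⟩
  have hR0 : 0 ≤ R := by
    obtain ⟨p, hp⟩ := hne
    exact le_trans (norm_nonneg p) (hR p hp)
  have key : ∀ z w : E, suppFn T z - suppFn T w ≤ R * ‖z - w‖ := by
    intro z w
    obtain ⟨p, hp, hpe⟩ := exists_suppFn_eq hT hne z
    have h1 : (inner ℝ z p : ℝ) - (inner ℝ w p : ℝ) ≤ R * ‖z - w‖ := by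
      rw [← inner_sub_left]
      calc (inner ℝ (z - w) p : ℝ) ≤ ‖z - w‖ * ‖p‖ := real_inner_le_norm _ _
        _ ≤ ‖z - w‖ * R := mul_le_mul_of_nonneg_left (hR p hp) (norm_nonneg _)
        _ = R * ‖z - w‖ := mul_comm _ _
    have h2 : (inner ℝ w p : ℝ) ≤ suppFn T w := le_suppFn hT hp w
    rw [hpe]; linarith
  refine (LipschitzWith.of_dist_le_mul (K := R.toNNReal) (fun z w => ?_)).continuous
  rw [Real.dist_eq, Real.coe_toNNReal R hR0, abs_sub_le_iff]
  constructor
  · simpa [dist_eq_norm] using key z w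
  · have := key w z
    rw [← norm_neg] at this
    simpa [dist_eq_norm, neg_sub] using this

lemma sep {s : Set E} (hs : Convex ℝ s) (hc : IsClosed s) {q : E} (hq : q ∉ s) :
    ∃ v : E, ∃ c : ℝ, (∀ a ∈ s, (inner ℝ v a : ℝ) < c) ∧ c < (inner ℝ v q : ℝ) := by
  obtain ⟨f, c, hfs, hfq⟩ := geometric_hahn_banach_closed_point hs hc hq
  refine ⟨(InnerProductSpace.toDual ℝ _).symm f, c, fun a ha => ?_, ?_⟩
  · rw [InnerProductSpace.toDual_symm_apply]; exact hfs a ha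
  · rw [InnerProductSpace.toDual_symm_apply]; exact hfq

lemma exists_ball {T₀ : Set E} (hT₀ : IsCompact T₀) (hconv : Convex ℝ T₀)
    (h0 : (0:E) ∈ T₀) (hpos : ∀ d : E, d ≠ 0 → 0 < suppFn T₀ d)
    {d₀ : E} (hd₀ : d₀ ≠ 0) :
    ∃ m : ℝ, 0 < m ∧ (∀ z : E, m * ‖z‖ ≤ suppFn T₀ z) ∧
      Metric.closedBall (0:E) m ⊆ T₀ := by
  have hsne : (Metric.sphere (0:E) 1).Nonempty := ⟨‖d₀‖⁻¹ • d₀, by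
    simp [norm_smul, inv_mul_cancel₀ (norm_ne_zero_iff.2 hd₀)]⟩
  obtain ⟨d, hd, hmin⟩ := (isCompact_sphere (0:E) 1).exists_isMinOn hsne
    (suppFn_continuous hT₀ ⟨0, h0⟩).continuousOn
  set m := suppFn T₀ d with hm
  have hdne : d ≠ 0 := by
    intro h; rw [h] at hd; simp at hd
  have hmpos : 0 < m := hpos d hdne
  have hdom : ∀ z : E, m * ‖z‖ ≤ suppFn T₀ z := by
    intro z
    rcases eq_or_ne z 0 with rfl | hz
    · simp [suppFn_nonneg hT₀ h0]
    · have hu : ‖z‖⁻¹ • z ∈ Metric.sphere (0:E) 1 := by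
        simp [norm_smul, inv_mul_cancel₀ (norm_ne_zero_iff.2 hz)]
      have hle : m ≤ suppFn T₀ (‖z‖⁻¹ • z) := hmin hu
      have h2 : suppFn T₀ (‖z‖⁻¹ • z) = ‖z‖⁻¹ * suppFn T₀ z :=
        suppFn_smul_vec hT₀ ⟨0, h0⟩ (by positivity) z
      rw [h2] at hle
      have hnz : (0:ℝ) < ‖z‖ := norm_pos_iff.2 hz
      calc m * ‖z‖ ≤ (‖z‖⁻¹ * suppFn T₀ z) * ‖z‖ := by nlinarith [hle]
        _ = suppFn T₀ z := by field_simp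
  refine ⟨m, hmpos, hdom, fun q hq => ?_⟩
  by_contra hqn
  obtain ⟨v, c, hvs, hvq⟩ := sep hconv hT₀.isClosed hqn
  have hvT : suppFn T₀ v ≤ c := suppFn_le ⟨0, h0⟩ (fun a ha => (hvs a ha).le)
  have hvne : v ≠ 0 := by
    rintro rfl
    have h1 := hvs 0 h0
    simp at h1 hvq
    linarith
  have h1 : m * ‖v‖ ≤ c := le_trans (hdom v) hvT
  have h2 : (inner ℝ v q : ℝ) ≤ ‖v‖ * ‖q‖ := real_inner_le_norm v q
  have h3 : ‖q‖ ≤ m := by simpa using Metric.mem_closedBall.1 hq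
  have hv0 : (0:ℝ) < ‖v‖ := norm_pos_iff.2 hvne
  nlinarith

lemma iInter_mem_H {H : Set (Set E)}
    (hmeet : ∀ K ∈ H, ∀ L ∈ H, K ∩ L ∈ H) :
    ∀ (m : ℕ) (T : Fin (m+1) → Set E), (∀ k, T k ∈ H) → (⋂ k, T k) ∈ H := by
  intro m
  induction m with
  | zero =>
    intro T h
    have : (⋂ k, T k) = T 0 := by
      ext z; simp [Set.mem_iInter, Fin.forall_fin_one]
    rw [this]; exact h 0
  | succ m ih =>
    intro T h
    have : (⋂ k, T k) = T 0 ∩ ⋂ k : Fin (m+1), T k.succ := by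
      ext z; simp [Set.mem_iInter, Fin.forall_fin_succ]
    rw [this]
    exact hmeet _ (h 0) _ (ih (fun k => T k.succ) (fun k => h k.succ))

/-- Key lemma: approximate the support value `m` of the constraint set by a
member of `H` containing `u`. -/
lemma key {H : Set (Set E)}
    (hg : ∀ K ∈ H, IsGauge K)
    (hadd : ∀ K ∈ H, ∀ L ∈ H, K + L ∈ H)
    (hsmul : ∀ K ∈ H, ∀ α : ℝ, 0 ≤ α → α • K ∈ H)
    {T₀ : Set E} (hT₀H : T₀ ∈ H) (hT₀ne : T₀ ≠ ({0} : Set E))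
    (hpos : ∀ d : E, d ≠ 0 → ∀ T ∈ H, T ≠ ({0} : Set E) → 0 < suppFn T d)
    {m₀ : ℝ} (hm₀ : 0 < m₀) (hball : Metric.closedBall (0:E) m₀ ⊆ T₀)
    (x u : E) (hu : u ≠ 0)
    (m : ℝ)
    (hm : ∀ z : E, (∀ T ∈ H, suppFn T z ≤ suppFn T x) → (inner ℝ u z : ℝ) ≤ m)
    {ε : ℝ} (hε : 0 < ε) :
    ∃ T ∈ H, u ∈ T ∧ suppFn T x ≤ m + ε := by
  obtain ⟨hT₀c, hT₀conv, hT₀0⟩ := hg T₀ hT₀H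
  -- m is nonnegative
  have hm0 : 0 ≤ m := by
    have := hm 0 (fun T hT => by
      obtain ⟨hc, _, h0⟩ := hg T hT
      rw [suppFn_zero_vec ⟨0, h0⟩]
      exact suppFn_nonneg hc h0 x)
    simpa using this
  have hune : ‖u‖ ≠ 0 := norm_ne_zero_iff.2 hu
  rcases eq_or_ne x 0 with rfl | hx
  · -- x = 0 : take a large multiple of T₀
    refine ⟨(‖u‖ / m₀) • T₀, hsmul T₀ hT₀H _ (by positivity), ?_, ?_⟩
    · refine Set.mem_smul_set.2 ⟨(m₀ / ‖u‖) • u, hball ?_, ?_⟩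
      · rw [Metric.mem_closedBall, dist_zero_right, norm_smul, Real.norm_eq_abs,
          abs_of_nonneg (by positivity : (0:ℝ) ≤ m₀ / ‖u‖), div_mul_cancel₀ _ hune]
      · rw [smul_smul, div_mul_div_comm, mul_comm, ← div_mul_div_comm,
          div_self (ne_of_gt hm₀), div_self hune, one_mul, one_smul]
    · rw [suppFn_zero_vec (Set.Nonempty.smul_set ⟨0, hT₀0⟩)]
      linarith
  · -- main case x ≠ 0
    have h₀pos : 0 < suppFn T₀ x := hpos x hx T₀ hT₀H hT₀ne
    set h₀ := suppFn T₀ x with hh₀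
    -- the union of all T ∈ H with suppFn T x ≤ 1
    set U : Set E := {q | ∃ T ∈ H, suppFn T x ≤ 1 ∧ q ∈ T} with hU
    have hUconv : Convex ℝ U := by
      rintro a ⟨T₁, hT₁, hs₁, ha⟩ b ⟨T₂, hT₂, hs₂, hb⟩ μ ν hμ hν hμν
      obtain ⟨hc₁, _, h0₁⟩ := hg T₁ hT₁
      obtain ⟨hc₂, _, h0₂⟩ := hg T₂ hT₂
      refine ⟨μ • T₁ + ν • T₂, hadd _ (hsmul _ hT₁ μ hμ) _ (hsmul _ hT₂ ν hν), ?_, ?_⟩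
      · rw [suppFn_set_add (hc₁.smul μ) (Set.Nonempty.smul_set ⟨0, h0₁⟩)
          (hc₂.smul ν) (Set.Nonempty.smul_set ⟨0, h0₂⟩),
          suppFn_smul_set hc₁ ⟨0, h0₁⟩ hμ, suppFn_smul_set hc₂ ⟨0, h0₂⟩ hν]
        calc μ * suppFn T₁ x + ν * suppFn T₂ x ≤ μ * 1 + ν * 1 :=
          add_le_add (mul_le_mul_of_nonneg_left hs₁ hμ) (mul_le_mul_of_nonneg_left hs₂ hν)
          _ = 1 := by rw [mul_one, mul_one, hμν]
      · exact Set.add_mem_add (Set.smul_mem_smul_set ha) (Set.smul_mem_smul_set hb)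
    have hU0 : (0:E) ∈ U := by
      refine ⟨(1 / h₀) • T₀, hsmul T₀ hT₀H _ (by positivity), ?_, ?_⟩
      · rw [suppFn_smul_set hT₀c ⟨0, hT₀0⟩ (by positivity)]
        rw [one_div, inv_mul_cancel₀ (ne_of_gt h₀pos)]
      · simpa using Set.smul_mem_smul_set (a := 1 / h₀) hT₀0
    set Q := closure U with hQ
    have hQconv : Convex ℝ Q := hUconv.closure
    have hQ0 : (0:E) ∈ Q := subset_closure hU0
    set μ₁ := m + ε / 2 with hμ₁
    have hμ₁pos : 0 < μ₁ := by positivity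
    -- Step B : u ∈ μ₁ • Q
    have hstepB : u ∈ μ₁ • Q := by
      by_contra hun
      obtain ⟨v, c, hvs, hvu⟩ := sep (hQconv.smul μ₁)
        (isClosed_closure.smul_of_ne_zero (ne_of_gt hμ₁pos)) hun
      have hc0 : 0 < c := by
        have h1 : (inner ℝ v (μ₁ • (0:E)) : ℝ) < c := hvs _ (Set.smul_mem_smul_set hQ0)
        simpa using h1
      -- z := (μ₁ / c) • v belongs to the constraint set
      have hzC : ∀ T ∈ H, suppFn T ((μ₁ / c) • v) ≤ suppFn T x := by
        intro T hT
        rcases eq_or_ne T ({0} : Set E) with rfl | hTne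
        · rw [suppFn_singleton_zero, suppFn_singleton_zero]
        · obtain ⟨hTc, _, hT0⟩ := hg T hT
          have hTpos : 0 < suppFn T x := hpos x hx T hT hTne
          refine suppFn_le ⟨0, hT0⟩ (fun p hp => ?_)
          have hq : (1 / suppFn T x) • p ∈ U :=
            ⟨(1 / suppFn T x) • T, hsmul T hT _ (by positivity), by
              rw [suppFn_smul_set hTc ⟨0, hT0⟩ (by positivity), one_div,
                inv_mul_cancel₀ (ne_of_gt hTpos)], Set.smul_mem_smul_set hp⟩
          have hlt : (inner ℝ v (μ₁ • ((1 / suppFn T x) • p)) : ℝ) < c :=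
            hvs _ (Set.smul_mem_smul_set (subset_closure hq))
          rw [real_inner_smul_right, real_inner_smul_right] at hlt
          have h1 : μ₁ * (inner ℝ v p : ℝ) < c * suppFn T x := by
            have := mul_lt_mul_of_pos_right hlt hTpos
            calc μ₁ * (inner ℝ v p : ℝ)
                = (μ₁ * (1 / suppFn T x * (inner ℝ v p : ℝ))) * suppFn T x := by
                  field_simp
              _ < c * suppFn T x := this
          rw [real_inner_smul_left]
          rw [div_mul_eq_mul_div, div_le_iff₀ hc0]
          calc μ₁ * (inner ℝ v p : ℝ) ≤ c * suppFn T x := h1.le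
            _ = suppFn T x * c := mul_comm _ _
      have := hm _ hzC
      rw [real_inner_smul_right] at this
      have hvu' : (inner ℝ u v : ℝ) > c := by rw [real_inner_comm]; exact hvu
      have : μ₁ / c * (inner ℝ u v : ℝ) ≤ m := this
      have hgt : μ₁ / c * (inner ℝ u v : ℝ) > μ₁ / c * c :=
        mul_lt_mul_of_pos_left hvu' (by positivity)
      rw [div_mul_cancel₀ _ (ne_of_gt hc0)] at hgt
      have : μ₁ ≤ m := le_trans hgt.le this
      linarith
    -- extract an approximating member of U
    obtain ⟨q, hqQ, hqu⟩ := Set.mem_smul_set.1 hstepB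
    set ε' := (ε / 2) * m₀ / (μ₁ * (h₀ + 1)) with hε'
    have hε'pos : 0 < ε' := by positivity
    obtain ⟨q', hq'U, hqq'⟩ := Metric.mem_closure_iff.1 hqQ ε' hε'pos
    obtain ⟨T₁, hT₁H, hs₁, hq'T₁⟩ := hq'U
    obtain ⟨hc₁, _, h0₁⟩ := hg T₁ hT₁H
    refine ⟨μ₁ • T₁ + (μ₁ * ε' / m₀) • T₀,
      hadd _ (hsmul _ hT₁H μ₁ hμ₁pos.le) _ (hsmul _ hT₀H _ (by positivity)), ?_, ?_⟩
    · -- u belongs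
      have hdec : u = μ₁ • q' + μ₁ • (q - q') := by
        rw [← smul_add, add_sub_cancel, hqu]
      rw [hdec]
      refine Set.add_mem_add (Set.smul_mem_smul_set hq'T₁) ?_
      refine Set.mem_smul_set.2 ⟨(m₀ / ε') • (q - q'), hball ?_, ?_⟩
      · rw [Metric.mem_closedBall, dist_zero_right, norm_smul, Real.norm_eq_abs,
          abs_of_nonneg (by positivity : (0:ℝ) ≤ m₀ / ε')]
        have hd : ‖q - q'‖ ≤ ε' := by
          rw [dist_eq_norm] at hqq'; linarith
        calc m₀ / ε' * ‖q - q'‖ ≤ m₀ / ε' * ε' :=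
            mul_le_mul_of_nonneg_left hd (by positivity)
          _ = m₀ := div_mul_cancel₀ _ (ne_of_gt hε'pos)
      · rw [smul_smul]
        congr 1
        field_simp
    · -- support bound
      rw [suppFn_set_add (hc₁.smul μ₁) (Set.Nonempty.smul_set ⟨0, h0₁⟩)
          (hT₀c.smul _) (Set.Nonempty.smul_set ⟨0, hT₀0⟩),
        suppFn_smul_set hc₁ ⟨0, h0₁⟩ hμ₁pos.le,
        suppFn_smul_set hT₀c ⟨0, hT₀0⟩ (by positivity)]
      have hb1 : μ₁ * suppFn T₁ x ≤ μ₁ := by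
        calc μ₁ * suppFn T₁ x ≤ μ₁ * 1 := mul_le_mul_of_nonneg_left hs₁ hμ₁pos.le
          _ = μ₁ := mul_one _
      have hb2 : μ₁ * ε' / m₀ * h₀ ≤ ε / 2 := by
        have heq : μ₁ * ε' / m₀ * h₀ = (ε / 2) * (h₀ / (h₀ + 1)) := by
          rw [hε']
          field_simp
        rw [heq]
        have : h₀ / (h₀ + 1) ≤ 1 := by
          rw [div_le_one (by positivity)]; linarith
        calc (ε / 2) * (h₀ / (h₀ + 1)) ≤ (ε / 2) * 1 :=
            mul_le_mul_of_nonneg_left this (by positivity)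
          _ = ε / 2 := mul_one _
      rw [← hh₀]
      have hsum := add_le_add hb1 hb2
      have hfin : μ₁ + ε / 2 = m + ε := by rw [hμ₁]; ring
      linarith [hsum, hfin]

end SuppAux

/-- **Theorem 5.1.**  Let `H` be a Hausdorff-closed cone of gauges in `ℝ^N`
closed under intersection, such that for every nonzero `y` the support values
`h_T(y)` of nonzero `T ∈ H` are positive and
`S_y = ⋂_{T ∈ H, T ≠ {0}} (1/h_T(y)) • T` is absorbing.  Then
`Σ_k h_T(x k) ≥ h_T(y)` for all `T ∈ H` iff there are `z k` with `Σ z k = y`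
and `h_T(x k) ≥ h_T(z k)` for all `T ∈ H` and all `k`. -/
theorem meet_decomposition {N : ℕ}
    (H : Set (Set (EuclideanSpace ℝ (Fin N))))
    (hg : ∀ K ∈ H, IsGauge K)
    (hclosed : IsHausdorffClosed H)
    (hadd : ∀ K ∈ H, ∀ L ∈ H, K + L ∈ H)
    (hsmul : ∀ K ∈ H, ∀ α : ℝ, 0 ≤ α → α • K ∈ H)
    (hmeet : ∀ K ∈ H, ∀ L ∈ H, K ∩ L ∈ H)
    (hpos : ∀ y : EuclideanSpace ℝ (Fin N), y ≠ 0 →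
      ∀ T ∈ H, T ≠ ({0} : Set (EuclideanSpace ℝ (Fin N))) → 0 < suppFn T y)
    (habs : ∀ y : EuclideanSpace ℝ (Fin N), y ≠ 0 →
      ∀ z : EuclideanSpace ℝ (Fin N), ∃ α : ℝ, 0 < α ∧
        α • z ∈ ⋂ (T : Set (EuclideanSpace ℝ (Fin N))) (_ : T ∈ H)
          (_ : T ≠ ({0} : Set (EuclideanSpace ℝ (Fin N)))),
            (1 / suppFn T y) • T)
    (n : ℕ) (y : EuclideanSpace ℝ (Fin N))
    (x : Fin (n + 1) → EuclideanSpace ℝ (Fin N)) :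
    (∀ T ∈ H, suppFn T y ≤ ∑ k, suppFn T (x k)) ↔
      ∃ z : Fin (n + 1) → EuclideanSpace ℝ (Fin N),
        (∑ k, z k) = y ∧
        ∀ T ∈ H, ∀ k, suppFn T (z k) ≤ suppFn T (x k) := by
    classical
  constructor
  · intro ha
    by_cases hdeg : ∀ T ∈ H, T = ({0} : Set (EuclideanSpace ℝ (Fin N)))
    · refine ⟨fun k => if k = 0 then y else 0, by simp, ?_⟩
      intro T hT k
      rw [hdeg T hT, SuppAux.suppFn_singleton_zero, SuppAux.suppFn_singleton_zero]
    · push_neg at hdeg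
      obtain ⟨T₀, hT₀H, hT₀ne⟩ := hdeg
      obtain ⟨hT₀c, hT₀conv, hT₀0⟩ := hg T₀ hT₀H
      rcases eq_or_ne y 0 with rfl | hy
      · refine ⟨fun _ => 0, by simp, ?_⟩
        intro T hT k
        obtain ⟨hc, _, h0⟩ := hg T hT
        rw [SuppAux.suppFn_zero_vec ⟨0, h0⟩]
        exact SuppAux.suppFn_nonneg hc h0 _
      · obtain ⟨m₀, hm₀, hdom, hball⟩ := SuppAux.exists_ball hT₀c hT₀conv hT₀0
          (fun d hd => hpos d hd T₀ hT₀H hT₀ne) hy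
        set C : Fin (n+1) → Set (EuclideanSpace ℝ (Fin N)) :=
          fun k => {z | ∀ T ∈ H, suppFn T z ≤ suppFn T (x k)} with hC
        have h0C : ∀ k, (0 : EuclideanSpace ℝ (Fin N)) ∈ C k := by
          intro k T hT
          obtain ⟨hc, _, h0⟩ := hg T hT
          rw [SuppAux.suppFn_zero_vec ⟨0, h0⟩]
          exact SuppAux.suppFn_nonneg hc h0 _
        have hCclosed : ∀ k, IsClosed (C k) := by
          intro k
          have : C k = ⋂ T ∈ H, {z | suppFn T z ≤ suppFn T (x k)} := by
            ext z; simp [hC, Set.mem_iInter]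
          rw [this]
          refine isClosed_biInter (fun T hT => ?_)
          obtain ⟨hc, _, h0⟩ := hg T hT
          exact isClosed_le (SuppAux.suppFn_continuous hc ⟨0, h0⟩) continuous_const
        have hCconv : ∀ k, Convex ℝ (C k) := by
          intro k z hz w hw a b haa hb hab
          intro T hT
          obtain ⟨hc, _, h0⟩ := hg T hT
          calc suppFn T (a • z + b • w)
              ≤ suppFn T (a • z) + suppFn T (b • w) :=
                SuppAux.suppFn_add_vec hc ⟨0, h0⟩ _ _
            _ = a * suppFn T z + b * suppFn T w := by
                rw [SuppAux.suppFn_smul_vec hc ⟨0, h0⟩ haa,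
                  SuppAux.suppFn_smul_vec hc ⟨0, h0⟩ hb]
            _ ≤ a * suppFn T (x k) + b * suppFn T (x k) :=
                add_le_add (mul_le_mul_of_nonneg_left (hz T hT) haa)
                  (mul_le_mul_of_nonneg_left (hw T hT) hb)
            _ = suppFn T (x k) := by rw [← add_mul, hab, one_mul]
        have hCcompact : ∀ k, IsCompact (C k) := by
          intro k
          refine Metric.isCompact_of_isClosed_isBounded (hCclosed k) ?_
          refine (Metric.isBounded_closedBall
            (x := (0 : EuclideanSpace ℝ (Fin N)))
            (r := suppFn T₀ (x k) / m₀)).subset (fun z hz => ?_)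
          have h1 : m₀ * ‖z‖ ≤ suppFn T₀ z := hdom z
          have h2 : suppFn T₀ z ≤ suppFn T₀ (x k) := hz T₀ hT₀H
          rw [Metric.mem_closedBall, dist_zero_right]
          rw [le_div_iff₀ hm₀]
          nlinarith
        set D := (fun z : Fin (n+1) → EuclideanSpace ℝ (Fin N) => ∑ k, z k) ''
          (Set.univ.pi C) with hD
        by_cases hyD : y ∈ D
        · obtain ⟨z, hz, hzsum⟩ := hyD
          exact ⟨z, hzsum, fun T hT k => (Set.mem_univ_pi.1 hz k) T hT⟩
        · exfalso
          have hDconv : Convex ℝ D := by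
            rintro _ ⟨z, hz, rfl⟩ _ ⟨w, hw, rfl⟩ a b haa hb hab
            refine ⟨fun k => a • z k + b • w k, Set.mem_univ_pi.2 (fun k => ?_), ?_⟩
            · exact hCconv k (Set.mem_univ_pi.1 hz k) (Set.mem_univ_pi.1 hw k) haa hb hab
            · simp only [Finset.sum_add_distrib, ← Finset.smul_sum]
          have hDcompact : IsCompact D :=
            (isCompact_univ_pi hCcompact).image
              (continuous_finset_sum _ (fun k _ => continuous_apply k))
          obtain ⟨u, c, hus, huy⟩ := SuppAux.sep hDconv hDcompact.isClosed hyD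
          have h0D : (0 : EuclideanSpace ℝ (Fin N)) ∈ D :=
            ⟨fun _ => 0, Set.mem_univ_pi.2 (fun k => h0C k), by simp⟩
          have hc0 : 0 < c := by
            have := hus 0 h0D
            simpa using this
          have hu : u ≠ 0 := by
            rintro rfl
            simp at huy
            linarith
          have hmax : ∀ k, ∃ w ∈ C k, ∀ z ∈ C k,
              (inner ℝ u z : ℝ) ≤ (inner ℝ u w : ℝ) := fun k =>
            (hCcompact k).exists_isMaxOn ⟨0, h0C k⟩ (SuppAux.contInner u).continuousOn
          choose w hwmem hwmax using hmax
          set m : Fin (n+1) → ℝ := fun k => (inner ℝ u (w k) : ℝ) with hmdef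
          have hsum_m : ∑ k, m k < c := by
            have hin : (∑ k, w k) ∈ D := ⟨w, Set.mem_univ_pi.2 hwmem, rfl⟩
            have := hus _ hin
            rwa [inner_sum] at this
          set ε := (c - ∑ k, m k) / (n + 1 : ℝ) with hε
          have hεpos : 0 < ε := by
            apply div_pos (by linarith) (by positivity)
          have hTk : ∀ k, ∃ T ∈ H, u ∈ T ∧ suppFn T (x k) ≤ m k + ε := by
            intro k
            exact SuppAux.key hg hadd hsmul hT₀H hT₀ne
              (fun d hd T hT hTne' => hpos d hd T hT hTne') hm₀ hball (x k) u hu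
              (m k) (fun z hz => hwmax k z hz) hεpos
          choose T hTH hTu hTle using hTk
          have hTallH : (⋂ k, T k) ∈ H := SuppAux.iInter_mem_H hmeet n T hTH
          obtain ⟨hTallc, _, hTall0⟩ := hg _ hTallH
          have h1 : suppFn (⋂ k, T k) y ≤ ∑ k, suppFn (⋂ k, T k) (x k) :=
            ha _ hTallH
          have h2 : ∀ k, suppFn (⋂ k, T k) (x k) ≤ suppFn (T k) (x k) := fun k =>
            SuppAux.suppFn_mono (hg _ (hTH k)).1 (Set.iInter_subset T k) ⟨0, hTall0⟩ _
          have h3 : (inner ℝ y u : ℝ) ≤ suppFn (⋂ k, T k) y :=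
            SuppAux.le_suppFn hTallc (Set.mem_iInter.2 hTu) y
          have h4 : ∑ k, suppFn (⋂ k, T k) (x k) ≤ ∑ k, (m k + ε) :=
            Finset.sum_le_sum (fun k _ => le_trans (h2 k) (hTle k))
          have h5 : ∑ k, (m k + ε) = (∑ k, m k) + (n + 1 : ℝ) * ε := by
            rw [Finset.sum_add_distrib, Finset.sum_const, Finset.card_univ,
              Fintype.card_fin, nsmul_eq_mul]
            push_cast
            ring
          have h6 : (n + 1 : ℝ) * ε = c - ∑ k, m k := by
            rw [hε]
            field_simp
          have h7 : (inner ℝ u y : ℝ) = (inner ℝ y u : ℝ) := real_inner_comm _ _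
          linarith
  · rintro ⟨z, hzsum, hz⟩ T hT
    obtain ⟨hc, _, h0⟩ := hg T hT
    calc suppFn T y = suppFn T (∑ k, z k) := by rw [hzsum]
      _ ≤ ∑ k, suppFn T (z k) := SuppAux.suppFn_sum_le hc ⟨0, h0⟩ _ _
      _ ≤ ∑ k, suppFn T (x k) := Finset.sum_le_sum (fun k _ => hz T hT k)
end

section
/- Let S_1 and S_2 be gauges in ℝ^N and let μ be a finite positive Borel measure on the unit sphere S_{N−1}. Then ∫_{S_{N−1}} h_{S_1 ∩ S_2} dμ = inf { ∫_{S_{N−1}} h_{S_1} dμ_1 + ∫_{S_{N−1}} h_{S_2} dμ_2 }, where the infimum is taken over all pairs of finite positive Borel measures μ_1, μ_2 on S_{N−1} such that μ_1 + μ_2 linearly majorizes μ. -/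
open MeasureTheory RealInnerProductSpace

/-- Linear majorization of finite positive Borel measures on the unit sphere
`S_{N-1} ⊆ ℝ^N`. -/
def LinMajorizes {N : ℕ}
    (μ ν : Measure (Metric.sphere (0 : EuclideanSpace ℝ (Fin N)) 1)) : Prop :=
  ∀ (m : ℕ) (U : Fin m → Set (Metric.sphere (0 : EuclideanSpace ℝ (Fin N)) 1)),
    (∀ k, MeasurableSet (U k)) →
    Pairwise (Function.onFun Disjoint U) →
    (⋃ k, U k) = Set.univ →
    ∃ μs : Fin m → Measure (Metric.sphere (0 : EuclideanSpace ℝ (Fin N)) 1),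
      (∀ k, IsFiniteMeasure (μs k)) ∧ (∑ k, μs k) = μ ∧
      ∀ (k : Fin m) (l : EuclideanSpace ℝ (Fin N)),
        ∫ u, ⟪l, (u : EuclideanSpace ℝ (Fin N))⟫ ∂(μs k) =
          ∫ u in U k, ⟪l, (u : EuclideanSpace ℝ (Fin N))⟫ ∂ν

namespace SuppAux

variable {N : ℕ} {K : Set (EuclideanSpace ℝ (Fin N))}

lemma bddAbove_inner (hc : IsCompact K) (x : EuclideanSpace ℝ (Fin N)) :
    BddAbove ((fun y => (inner ℝ x y : ℝ)) '' K) :=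
  (hc.image (continuous_const.inner continuous_id)).bddAbove

lemma inner_le_suppFn (hc : IsCompact K) {y : EuclideanSpace ℝ (Fin N)} (hy : y ∈ K)
    (x : EuclideanSpace ℝ (Fin N)) : (⟪x, y⟫ : ℝ) ≤ suppFn K x :=
  le_csSup (bddAbove_inner hc x) ⟨y, hy, rfl⟩

lemma suppFn_le_s18 (hne : K.Nonempty) {x : EuclideanSpace ℝ (Fin N)} {c : ℝ}
    (h : ∀ y ∈ K, (⟪x, y⟫ : ℝ) ≤ c) : suppFn K x ≤ c :=
  csSup_le (hne.image _) (by rintro r ⟨y, hy, rfl⟩; exact h y hy)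

lemma suppFn_nonneg_s18 (hc : IsCompact K) (h0 : (0 : EuclideanSpace ℝ (Fin N)) ∈ K)
    (x : EuclideanSpace ℝ (Fin N)) : 0 ≤ suppFn K x := by
  simpa using inner_le_suppFn hc h0 x

lemma suppFn_zero (hc : IsCompact K) (hne : K.Nonempty) : suppFn K 0 = 0 := by
  obtain ⟨y, hy⟩ := hne
  refine le_antisymm (suppFn_le_s18 ⟨y, hy⟩ fun z _ => by simp) ?_
  simpa using inner_le_suppFn hc hy 0

lemma suppFn_smul (hc : IsCompact K) (hne : K.Nonempty) {c : ℝ} (hcpos : 0 ≤ c)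
    (x : EuclideanSpace ℝ (Fin N)) : suppFn K (c • x) = c * suppFn K x := by
  have hle : ∀ (d : ℝ), 0 ≤ d → ∀ z, suppFn K (d • z) ≤ d * suppFn K z := by
    intro d hd z
    refine suppFn_le_s18 hne fun y hy => ?_
    rw [real_inner_smul_left]
    exact mul_le_mul_of_nonneg_left (inner_le_suppFn hc hy z) hd
  rcases eq_or_lt_of_le hcpos with h | h
  · simp [← h, suppFn_zero hc hne]
  · refine le_antisymm (hle c hcpos x) ?_
    have := hle c⁻¹ (by positivity) (c • x)
    rw [smul_smul, inv_mul_cancel₀ h.ne', one_smul] at this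
    calc c * suppFn K x ≤ c * (c⁻¹ * suppFn K (c • x)) :=
          mul_le_mul_of_nonneg_left this hcpos
      _ = suppFn K (c • x) := by field_simp

lemma suppFn_add_le (hc : IsCompact K) (hne : K.Nonempty)
    (x x' : EuclideanSpace ℝ (Fin N)) :
    suppFn K (x + x') ≤ suppFn K x + suppFn K x' := by
  refine suppFn_le_s18 hne fun y hy => ?_
  rw [inner_add_left]
  exact add_le_add (inner_le_suppFn hc hy x) (inner_le_suppFn hc hy x')

lemma convexOn_suppFn (hc : IsCompact K) (hne : K.Nonempty) :
    ConvexOn ℝ Set.univ (suppFn K) := by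
  refine ⟨convex_univ, fun x _ y _ a b ha hb _ => ?_⟩
  calc suppFn K (a • x + b • y) ≤ suppFn K (a • x) + suppFn K (b • y) :=
        suppFn_add_le hc hne _ _
    _ = a * suppFn K x + b * suppFn K y := by
        rw [suppFn_smul hc hne ha, suppFn_smul hc hne hb]
    _ = a • suppFn K x + b • suppFn K y := rfl

lemma suppFn_sub_le (hc : IsCompact K) (hne : K.Nonempty) {C : ℝ}
    (hC : ∀ y ∈ K, ‖y‖ ≤ C) (x x' : EuclideanSpace ℝ (Fin N)) :
    suppFn K x ≤ suppFn K x' + C * ‖x - x'‖ := by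
  refine suppFn_le_s18 hne fun y hy => ?_
  have : (⟪x, y⟫ : ℝ) = ⟪x', y⟫ + ⟪x - x', y⟫ := by
    rw [← inner_add_left, add_sub_cancel]
  rw [this]
  refine add_le_add (inner_le_suppFn hc hy x') ?_
  calc (⟪x - x', y⟫ : ℝ) ≤ ‖x - x'‖ * ‖y‖ := real_inner_le_norm _ _
    _ ≤ ‖x - x'‖ * C := by
        refine mul_le_mul_of_nonneg_left (hC y hy) (norm_nonneg _)
    _ = C * ‖x - x'‖ := mul_comm _ _

lemma continuous_suppFn (hc : IsCompact K) (hne : K.Nonempty) :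
    Continuous (suppFn K) := by
  obtain ⟨C, hC⟩ := (hc.image continuous_norm).bddAbove
  have hC' : ∀ y ∈ K, ‖y‖ ≤ C := fun y hy => hC ⟨y, hy, rfl⟩
  have hC0 : 0 ≤ C := by
    obtain ⟨y, hy⟩ := hne
    exact le_trans (norm_nonneg y) (hC' y hy)
  have : LipschitzWith C.toNNReal (suppFn K) := by
    refine LipschitzWith.of_dist_le_mul fun x x' => ?_
    rw [Real.dist_eq, abs_sub_le_iff]
    constructor
    · have := suppFn_sub_le hc hne hC' x x'
      have hd : ‖x - x'‖ = dist x x' := (dist_eq_norm _ _).symm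
      rw [hd] at this
      calc suppFn K x - suppFn K x' ≤ C * dist x x' := by linarith
        _ = ↑C.toNNReal * dist x x' := by rw [Real.coe_toNNReal _ hC0]
    · have := suppFn_sub_le hc hne hC' x' x
      have hd : ‖x' - x‖ = dist x x' := by rw [dist_eq_norm, norm_sub_rev]
      rw [hd] at this
      calc suppFn K x' - suppFn K x ≤ C * dist x x' := by linarith
        _ = ↑C.toNNReal * dist x x' := by rw [Real.coe_toNNReal _ hC0]
  exact this.continuous

lemma mem_of_inner_le (hc : IsCompact K) (hconv : Convex ℝ K) (hne : K.Nonempty)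
    {a : EuclideanSpace ℝ (Fin N)}
    (h : ∀ v, (⟪v, a⟫ : ℝ) ≤ suppFn K v) : a ∈ K := by
  by_contra hna
  obtain ⟨f, u, hfK, hfa⟩ := geometric_hahn_banach_closed_point hconv hc.isClosed hna
  set w := (InnerProductSpace.toDual ℝ (EuclideanSpace ℝ (Fin N))).symm f with hw
  have hfw : ∀ y, f y = ⟪w, y⟫ := fun y =>
    (InnerProductSpace.toDual_symm_apply (y := f)).symm
  have h1 : suppFn K w ≤ u := suppFn_le_s18 hne fun y hy => by
    rw [← hfw]; exact (hfK y hy).le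
  have h2 : (⟪w, a⟫ : ℝ) ≤ u := le_trans (h w) h1
  rw [← hfw] at h2
  exact absurd hfa (not_lt.mpr h2)

end SuppAux
namespace SuppAux

variable {N : ℕ}

/-- Kill an additive constant using positive homogeneity. -/
lemma le_of_le_add_const {E' : Type*} [AddCommGroup E'] [Module ℝ E']
    {ψ h : E' → ℝ} {r : ℝ}
    (hψ : ∀ (c : ℝ) (v : E'), ψ (c • v) = c * ψ v)
    (hh : ∀ (c : ℝ), 0 ≤ c → ∀ v : E', h (c • v) = c * h v)
    (hr : 0 ≤ r) (H : ∀ v, ψ v ≤ h v + r) (v : E') : ψ v ≤ h v := by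
  refine le_of_forall_pos_le_add fun ε hε => ?_
  set c : ℝ := (r + 1) / ε with hc
  have hc0 : 0 < c := by positivity
  have hkey := H (c • v)
  rw [hψ c v, hh c hc0.le v] at hkey
  have hcε : c * ε = r + 1 := by rw [hc]; field_simp
  nlinarith [hkey, hc0, hε, hr]

/-- The key convex-duality fact: the infimal convolution of the support
functions of `S₁` and `S₂` is at most the support function of `S₁ ∩ S₂`. -/
lemma exists_infconv {S₁ S₂ : Set (EuclideanSpace ℝ (Fin N))}
    (h₁c : IsCompact S₁) (h₁conv : Convex ℝ S₁)
    (h₁0 : (0 : EuclideanSpace ℝ (Fin N)) ∈ S₁)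
    (h₂c : IsCompact S₂) (h₂conv : Convex ℝ S₂)
    (h₂0 : (0 : EuclideanSpace ℝ (Fin N)) ∈ S₂)
    (u : EuclideanSpace ℝ (Fin N)) {δ : ℝ} (hδ : 0 < δ) :
    ∃ v, suppFn S₁ v + suppFn S₂ (u - v) < suppFn (S₁ ∩ S₂) u + δ := by
  by_contra hcon
  push_neg at hcon
  have h₁ne : S₁.Nonempty := ⟨0, h₁0⟩
  have h₂ne : S₂.Nonempty := ⟨0, h₂0⟩
  have h₁₂c : IsCompact (S₁ ∩ S₂) := h₁c.inter_right h₂c.isClosed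
  have h₁₂ne : (S₁ ∩ S₂).Nonempty := ⟨0, h₁0, h₂0⟩
  set c' : ℝ := suppFn (S₁ ∩ S₂) u + δ / 2 with hc'
  set s : Set (EuclideanSpace ℝ (Fin N) × ℝ) := {p | suppFn S₁ p.1 < p.2} with hs
  set t : Set (EuclideanSpace ℝ (Fin N) × ℝ) :=
    {p | p.2 ≤ c' - suppFn S₂ (u - p.1)} with ht
  have hsopen : IsOpen s := by
    have hcont : Continuous fun p : EuclideanSpace ℝ (Fin N) × ℝ =>
        p.2 - suppFn S₁ p.1 :=
      continuous_snd.sub ((continuous_suppFn h₁c h₁ne).comp continuous_fst)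
    have hopen : IsOpen {p : EuclideanSpace ℝ (Fin N) × ℝ | 0 < p.2 - suppFn S₁ p.1} :=
      isOpen_lt continuous_const hcont
    convert hopen using 1
    ext p; simp [hs, sub_pos]
  have hsconv : Convex ℝ s := by
    have h := (convexOn_suppFn h₁c h₁ne).convex_strict_epigraph
    convert h using 1
    ext p; simp [hs]
  have htconv : Convex ℝ t := by
    rintro p hp q hq a b ha hb hab
    simp only [ht, Set.mem_setOf_eq] at hp hq ⊢
    have hsub : u - (a • p + b • q).1 = a • (u - p.1) + b • (u - q.1) := by
      show u - (a • p.1 + b • q.1) = _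
      rw [smul_sub, smul_sub]
      have hu : a • u + b • u = u := by rw [← add_smul, hab, one_smul]
      conv_lhs => rw [← hu]
      abel
    have hS₂ : suppFn S₂ (u - (a • p + b • q).1) ≤
        a * suppFn S₂ (u - p.1) + b * suppFn S₂ (u - q.1) := by
      rw [hsub]
      calc suppFn S₂ (a • (u - p.1) + b • (u - q.1))
          ≤ suppFn S₂ (a • (u - p.1)) + suppFn S₂ (b • (u - q.1)) :=
            suppFn_add_le h₂c h₂ne _ _
        _ = a * suppFn S₂ (u - p.1) + b * suppFn S₂ (u - q.1) := by
            rw [suppFn_smul h₂c h₂ne ha, suppFn_smul h₂c h₂ne hb]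
    have hsum : a * p.2 + b * q.2 ≤
        a * (c' - suppFn S₂ (u - p.1)) + b * (c' - suppFn S₂ (u - q.1)) :=
      add_le_add (mul_le_mul_of_nonneg_left hp ha) (mul_le_mul_of_nonneg_left hq hb)
    have hexp : a * (c' - suppFn S₂ (u - p.1)) + b * (c' - suppFn S₂ (u - q.1))
        = c' - (a * suppFn S₂ (u - p.1) + b * suppFn S₂ (u - q.1)) := by
      linear_combination (c' : ℝ) * hab
    show (a • p + b • q).2 ≤ c' - suppFn S₂ (u - (a • p + b • q).1)
    have h2 : (a • p + b • q).2 = a * p.2 + b * q.2 := rfl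
    rw [h2]
    linarith [hsum, hexp, hS₂]
  have hdisj : Disjoint s t := by
    rw [Set.disjoint_left]
    rintro p hps hpt
    simp only [hs, ht, Set.mem_setOf_eq] at hps hpt
    have h1 := hcon p.1
    rw [hc'] at hpt
    linarith
  obtain ⟨f, u₀, hfs, hft⟩ := geometric_hahn_banach_open hsconv hsopen htconv hdisj
  set s₀ : ℝ := f (0, 1) with hs₀
  have hsplit : ∀ (v : EuclideanSpace ℝ (Fin N)) (T : ℝ),
      f (v, T) = f (v, 0) + T * s₀ := by
    intro v T
    have hdecomp : ((v, T) : EuclideanSpace ℝ (Fin N) × ℝ)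
        = (v, (0:ℝ)) + T • ((0 : EuclideanSpace ℝ (Fin N)), (1:ℝ)) := by
      simp [Prod.ext_iff]
    rw [hdecomp, f.map_add, f.map_smul, smul_eq_mul]
  set φ : EuclideanSpace ℝ (Fin N) → ℝ := fun v => f (v, 0) with hφ
  have hφlin : ∀ (c : ℝ) (v : EuclideanSpace ℝ (Fin N)), φ (c • v) = c * φ v := by
    intro c v
    have hcv : ((c • v : EuclideanSpace ℝ (Fin N)), (0:ℝ)) = c • ((v, (0:ℝ))) := by
      simp [Prod.ext_iff]
    show f ((c • v : EuclideanSpace ℝ (Fin N)), (0:ℝ)) = c * f (v, 0)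
    rw [hcv, f.map_smul, smul_eq_mul]
  have hφ0 : φ 0 = 0 := by have := hφlin 0 0; simpa using this
  have hA : ∀ (v : EuclideanSpace ℝ (Fin N)) (T : ℝ),
      suppFn S₁ v < T → φ v + T * s₀ < u₀ := by
    intro v T hT
    have hmem : (v, T) ∈ s := hT
    have := hfs _ hmem
    rwa [hsplit] at this
  have hB : ∀ v : EuclideanSpace ℝ (Fin N),
      u₀ ≤ φ v + (c' - suppFn S₂ (u - v)) * s₀ := by
    intro v
    have hmem : (v, c' - suppFn S₂ (u - v)) ∈ t := by
      simp only [ht, Set.mem_setOf_eq]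
      exact le_rfl
    have := hft _ hmem
    rwa [hsplit] at this
  have hS₁0 : suppFn S₁ 0 = 0 := suppFn_zero h₁c h₁ne
  have hS₂0 : suppFn S₂ 0 = 0 := suppFn_zero h₂c h₂ne
  have hu₀ : 0 ≤ u₀ := by
    by_contra hu
    push_neg at hu
    rcases lt_trichotomy s₀ 0 with h | h | h
    · have hT : (0:ℝ) < -u₀ / (2 * (-s₀)) := by
        apply div_pos (by linarith) (by linarith)
      have hA0 := hA 0 (-u₀ / (2 * (-s₀))) (by rw [hS₁0]; exact hT)
      rw [hφ0] at hA0
      have hTs : -u₀ / (2 * (-s₀)) * s₀ = u₀ / 2 := by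
        field_simp [h.ne]
      nlinarith
    · have hA0 := hA 0 1 (by rw [hS₁0]; norm_num)
      rw [hφ0, h] at hA0
      linarith
    · have hA0 := hA 0 1 (by rw [hS₁0]; norm_num)
      rw [hφ0] at hA0
      nlinarith
  have hs₀neg : s₀ < 0 := by
    rcases lt_trichotomy s₀ 0 with h | h | h
    · exact h
    · exfalso
      have h1 : ∀ v : EuclideanSpace ℝ (Fin N), φ v < u₀ := by
        intro v
        have := hA v (suppFn S₁ v + 1) (by linarith)
        rw [h] at this; linarith
      have h2 := hB 0
      rw [h, hφ0] at h2
      simp only [mul_zero, add_zero, zero_add] at h2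
      have := h1 0
      rw [hφ0] at this
      linarith
    · exfalso
      set T : ℝ := max (suppFn S₁ 0 + 1) ((u₀ - φ 0) / s₀ + 1) with hT
      have h1 : suppFn S₁ 0 < T := lt_of_lt_of_le (by linarith) (le_max_left _ _)
      have h2 := hA 0 T h1
      have h3 : (u₀ - φ 0) / s₀ + 1 ≤ T := le_max_right _ _
      have h4 : (u₀ - φ 0) / s₀ * s₀ = u₀ - φ 0 := by field_simp
      nlinarith
  set d : ℝ := -s₀ with hd
  have hdpos : 0 < d := by rw [hd]; linarith
  have hsd : s₀ = -d := by rw [hd]; ring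
  set ψ : EuclideanSpace ℝ (Fin N) → ℝ := fun v => φ v / d with hψ
  have hψlin : ∀ (c : ℝ) (v : EuclideanSpace ℝ (Fin N)), ψ (c • v) = c * ψ v := by
    intro c v; show φ (c • v) / d = c * (φ v / d); rw [hφlin]; ring
  set r : ℝ := u₀ / d with hr
  have hrpos : 0 ≤ r := div_nonneg hu₀ hdpos.le
  have hψ₁' : ∀ v, ψ v ≤ suppFn S₁ v + r := by
    intro v
    have key : ∀ ε > (0:ℝ), φ v + (suppFn S₁ v + ε) * s₀ < u₀ := fun ε hε =>
      hA v _ (by linarith)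
    have key2 : φ v + suppFn S₁ v * s₀ ≤ u₀ := by
      refine le_of_forall_pos_le_add fun ε hε => ?_
      have hk := key (ε / d) (by positivity)
      have hh : ε / d * s₀ = -ε := by rw [hsd]; field_simp
      nlinarith
    show φ v / d ≤ suppFn S₁ v + u₀ / d
    rw [div_le_iff₀ hdpos]
    have hmul : u₀ / d * d = u₀ := div_mul_cancel₀ _ hdpos.ne'
    nlinarith [key2]
  have hψ₁ : ∀ v, ψ v ≤ suppFn S₁ v :=
    le_of_le_add_const hψlin (fun c hc v => suppFn_smul h₁c h₁ne hc v) hrpos hψ₁'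
  have hφadd : ∀ v v' : EuclideanSpace ℝ (Fin N), φ (v + v') = φ v + φ v' := by
    intro v v'
    have hvv : ((v + v' : EuclideanSpace ℝ (Fin N)), (0:ℝ))
        = ((v : EuclideanSpace ℝ (Fin N)), (0:ℝ)) + (v', (0:ℝ)) := by
      simp [Prod.ext_iff]
    show f ((v + v' : EuclideanSpace ℝ (Fin N)), (0:ℝ)) = f (v, 0) + f (v', 0)
    rw [hvv, f.map_add]
  have hψadd : ∀ v v' : EuclideanSpace ℝ (Fin N), ψ (v + v') = ψ v + ψ v' := by
    intro v v'
    show φ (v + v') / d = φ v / d + φ v' / d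
    rw [hφadd]; ring
  have hB' : ∀ v : EuclideanSpace ℝ (Fin N),
      r + c' - suppFn S₂ (u - v) ≤ ψ v := by
    intro v
    have h0 := hB v
    rw [hsd] at h0
    have h1 : u₀ + d * (c' - suppFn S₂ (u - v)) ≤ φ v := by nlinarith
    show r + c' - suppFn S₂ (u - v) ≤ φ v / d
    rw [hr, ← sub_nonneg]
    have expand : φ v / d - (u₀ / d + c' - suppFn S₂ (u - v))
        = (φ v - (u₀ + d * (c' - suppFn S₂ (u - v)))) / d := by
      field_simp; ring
    rw [expand]
    exact div_nonneg (by linarith) hdpos.le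
  have hψu : r + c' ≤ ψ u := by
    have := hB' u
    rw [sub_self, hS₂0] at this
    linarith
  have hψ₂' : ∀ w, ψ w ≤ suppFn S₂ w + (ψ u - r - c') := by
    intro w
    have h0 := hB' (u - w)
    have huw : u - (u - w) = w := by abel
    rw [huw] at h0
    have h1 : ψ u = ψ (u - w) + ψ w := by
      rw [← hψadd]; congr 1; abel
    linarith
  have hψ₂ : ∀ w, ψ w ≤ suppFn S₂ w :=
    le_of_le_add_const hψlin (fun c hc v => suppFn_smul h₂c h₂ne hc v)
      (by linarith) hψ₂'
  set ψCLM : EuclideanSpace ℝ (Fin N) →L[ℝ] ℝ :=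
    d⁻¹ • (f.comp (ContinuousLinearMap.inl ℝ (EuclideanSpace ℝ (Fin N)) ℝ)) with hψCLM
  set a : EuclideanSpace ℝ (Fin N) :=
    (InnerProductSpace.toDual ℝ (EuclideanSpace ℝ (Fin N))).symm ψCLM with haa
  have ha : ∀ v, (⟪a, v⟫ : ℝ) = ψ v := by
    intro v
    rw [haa, InnerProductSpace.toDual_symm_apply]
    show d⁻¹ • (f ((ContinuousLinearMap.inl ℝ _ ℝ) v)) = φ v / d
    rw [ContinuousLinearMap.inl_apply, smul_eq_mul]
    show d⁻¹ * φ v = φ v / d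
    ring
  have haS₁ : a ∈ S₁ := by
    refine mem_of_inner_le h₁c h₁conv h₁ne fun v => ?_
    rw [real_inner_comm, ha]; exact hψ₁ v
  have haS₂ : a ∈ S₂ := by
    refine mem_of_inner_le h₂c h₂conv h₂ne fun v => ?_
    rw [real_inner_comm, ha]; exact hψ₂ v
  have hfinal : (⟪u, a⟫ : ℝ) ≤ suppFn (S₁ ∩ S₂) u :=
    inner_le_suppFn h₁₂c ⟨haS₁, haS₂⟩ u
  rw [real_inner_comm, ha] at hfinal
  rw [hc'] at hψu
  linarith

end SuppAux
namespace SuppAux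

/-- Extract a finite measurable partition from an open cover of a compact
space such that each piece satisfies a subset-monotone predicate. -/
lemma exists_finite_partition {X : Type*} [TopologicalSpace X] [CompactSpace X]
    [MeasurableSpace X] [OpensMeasurableSpace X] (Q : Set X → Prop)
    (hQM : ∀ A B : Set X, A ⊆ B → Q B → Q A)
    (h : ∀ x : X, ∃ W : Set X, IsOpen W ∧ x ∈ W ∧ Q W) :
    ∃ (m : ℕ) (U : Fin m → Set X), (∀ k, MeasurableSet (U k)) ∧
      Pairwise (Function.onFun Disjoint U) ∧ (⋃ k, U k) = Set.univ ∧
      ∀ k, Q (U k) := by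
  cases isEmpty_or_nonempty X with
  | inl hX =>
    refine ⟨0, fun k => k.elim0, fun k => k.elim0, fun k => k.elim0, ?_, fun k => k.elim0⟩
    rw [Set.univ_eq_empty_iff.mpr hX]
    exact Set.iUnion_of_empty _
  | inr hX =>
    choose W hWo hWx hWQ using h
    obtain ⟨sfin, hcov⟩ := isCompact_univ.elim_finite_subcover W hWo
      (fun x _ => Set.mem_iUnion.mpr ⟨x, hWx x⟩)
    set n := sfin.card with hn
    set e : Fin n ≃ {x // x ∈ sfin} := sfin.equivFin.symm with he
    set G : ℕ → Set X := fun i => if h : i < n then W (e ⟨i, h⟩) else ∅ with hG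
    have hGopen : ∀ i, MeasurableSet (G i) := by
      intro i
      simp only [hG]
      split_ifs with h
      · exact (hWo _).measurableSet
      · exact MeasurableSet.empty
    have hGuniv : (⋃ i, G i) = Set.univ := by
      apply Set.eq_univ_of_univ_subset
      intro x hx
      have := hcov (Set.mem_univ x)
      rw [Set.mem_iUnion₂] at this
      obtain ⟨y, hy, hxy⟩ := this
      set k := e.symm ⟨y, hy⟩ with hk
      refine Set.mem_iUnion.mpr ⟨(k : ℕ), ?_⟩
      have : G (k : ℕ) = W y := by
        simp only [hG]
        rw [dif_pos k.isLt]
        congr 1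
        have : (⟨(k:ℕ), k.isLt⟩ : Fin n) = k := by ext; rfl
        rw [this, hk, Equiv.apply_symm_apply]
      rw [this]; exact hxy
    refine ⟨n, fun k => disjointed G k, ?_, ?_, ?_, ?_⟩
    · exact fun k => MeasurableSet.disjointed hGopen _
    · intro j k hjk
      exact disjoint_disjointed G (Fin.val_injective.ne hjk)
    · apply Set.eq_univ_of_univ_subset
      intro x hx
      have : x ∈ ⋃ i, disjointed G i := by rw [iUnion_disjointed, hGuniv]; trivial
      obtain ⟨i, hi⟩ := Set.mem_iUnion.mp this
      have hin : i < n := by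
        by_contra hni
        have : disjointed G i ⊆ G i := disjointed_le G i
        have hGi : G i = ∅ := by simp only [hG]; rw [dif_neg hni]
        rw [hGi] at this
        exact this hi
      exact Set.mem_iUnion.mpr ⟨⟨i, hin⟩, hi⟩
    · intro k
      have hGk : G (k : ℕ) = W (e k) := by
        simp only [hG, k.isLt, dif_pos, Fin.eta]
      refine hQM _ _ (le_trans (disjointed_le G k) (le_of_eq hGk)) (hWQ (e k))

variable {N : ℕ}

open scoped Classical in
/-- Normalization map to the sphere (with default value `u₀` at `0`). -/
noncomputable def nrm (u₀ : Metric.sphere (0 : EuclideanSpace ℝ (Fin N)) 1)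
    (v : EuclideanSpace ℝ (Fin N)) : Metric.sphere (0 : EuclideanSpace ℝ (Fin N)) 1 :=
  ⟨if v = 0 then (u₀ : EuclideanSpace ℝ (Fin N)) else ‖v‖⁻¹ • v, by
    split_ifs with h
    · exact u₀.2
    · rw [mem_sphere_zero_iff_norm, norm_smul, norm_inv, norm_norm]
      exact inv_mul_cancel₀ (norm_ne_zero_iff.mpr h)⟩

lemma nrm_smul (u₀ : Metric.sphere (0 : EuclideanSpace ℝ (Fin N)) 1)
    (v : EuclideanSpace ℝ (Fin N)) :
    ‖v‖ • (nrm u₀ v : EuclideanSpace ℝ (Fin N)) = v := by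
  by_cases h : v = 0
  · simp [nrm, h]
  · classical
    simp only [nrm, if_neg h]
    rw [smul_smul, mul_inv_cancel₀ (norm_ne_zero_iff.mpr h), one_smul]

lemma measurable_nrm (u₀ : Metric.sphere (0 : EuclideanSpace ℝ (Fin N)) 1) :
    Measurable (nrm u₀) := by
  classical
  apply Measurable.subtype_mk
  have hset : MeasurableSet {v : EuclideanSpace ℝ (Fin N) | v = 0} := by
    have : {v : EuclideanSpace ℝ (Fin N) | v = 0} = {0} := by ext; simp
    rw [this]; exact MeasurableSet.singleton 0
  exact Measurable.ite hset measurable_const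
    ((measurable_norm.inv).smul measurable_id)

/-- Homogeneous functions interact with `nrm` as expected. -/
lemma hom_nrm {f : EuclideanSpace ℝ (Fin N) → ℝ}
    (hom : ∀ (c : ℝ), 0 ≤ c → ∀ x, f (c • x) = c * f x)
    (u₀ : Metric.sphere (0 : EuclideanSpace ℝ (Fin N)) 1)
    (v : EuclideanSpace ℝ (Fin N)) :
    ‖v‖ * f (nrm u₀ v) = f v := by
  rw [← hom ‖v‖ (norm_nonneg v), nrm_smul]

lemma integrable_cont {f : Metric.sphere (0 : EuclideanSpace ℝ (Fin N)) 1 → ℝ}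
    (hf : Continuous f) (ρ : Measure (Metric.sphere (0 : EuclideanSpace ℝ (Fin N)) 1))
    [IsFiniteMeasure ρ] : Integrable f ρ := by
  have := (hf.continuousOn).integrableOn_compact (μ := ρ) isCompact_univ
  rwa [integrableOn_univ] at this

lemma sum_restrict {X : Type*} [MeasurableSpace X] (μ : Measure X) {m : ℕ}
    {U : Fin m → Set X} (hmeas : ∀ k, MeasurableSet (U k))
    (hdisj : Pairwise (Function.onFun Disjoint U)) (huniv : (⋃ k, U k) = Set.univ) :
    ∑ k, μ.restrict (U k) = μ := by
  rw [← Measure.sum_fintype, ← Measure.restrict_iUnion hdisj hmeas, huniv,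
    Measure.restrict_univ]

lemma integral_smul_dirac {X : Type*} [MeasurableSpace X] [MeasurableSingletonClass X]
    (c : ENNReal) (x : X) (f : X → ℝ) :
    ∫ w, f w ∂(c • Measure.dirac x) = c.toReal * f x := by
  rw [integral_smul_measure, integral_dirac, smul_eq_mul]

lemma isFiniteMeasure_smul_dirac {X : Type*} [MeasurableSpace X]
    {c : ENNReal} (hc : c ≠ ⊤) (x : X) : IsFiniteMeasure (c • Measure.dirac x) := by
  constructor
  rw [Measure.smul_apply, smul_eq_mul]
  exact ENNReal.mul_lt_top hc.lt_top (measure_lt_top _ _)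

/-- Integral of (the coercion of) a function against the "normalized
pushforward with norm-density" of a vector-valued map. -/
lemma integral_pushNrm (u₀ : Metric.sphere (0 : EuclideanSpace ℝ (Fin N)) 1)
    (ρ : Measure (Metric.sphere (0 : EuclideanSpace ℝ (Fin N)) 1))
    (g : Metric.sphere (0 : EuclideanSpace ℝ (Fin N)) 1 → EuclideanSpace ℝ (Fin N))
    (hg : Measurable g) {f : EuclideanSpace ℝ (Fin N) → ℝ} (hf : Continuous f)
    (hom : ∀ (c : ℝ), 0 ≤ c → ∀ x, f (c • x) = c * f x) :
    ∫ w, f (w : EuclideanSpace ℝ (Fin N))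
        ∂(Measure.map (fun u => nrm u₀ (g u))
          (ρ.withDensity (fun u => (‖g u‖₊ : ENNReal))))
      = ∫ u, f (g u) ∂ρ := by
  have hφ : Measurable fun u => nrm u₀ (g u) := (measurable_nrm u₀).comp hg
  have hfc : Continuous fun w : Metric.sphere (0 : EuclideanSpace ℝ (Fin N)) 1 =>
      f (w : EuclideanSpace ℝ (Fin N)) := hf.comp continuous_subtype_val
  rw [integral_map hφ.aemeasurable hfc.aestronglyMeasurable]
  have hgn : Measurable fun u => ‖g u‖₊ := measurable_nnnorm.comp hg
  rw [integral_withDensity_eq_integral_smul hgn _]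
  congr 1
  ext u
  rw [NNReal.smul_def, smul_eq_mul, coe_nnnorm]
  exact hom_nrm hom u₀ (g u)

end SuppAux
namespace SuppAux

variable {N : ℕ}

noncomputable def nu1 (μ : Measure (Metric.sphere (0 : EuclideanSpace ℝ (Fin N)) 1))
    (u₀ : Metric.sphere (0 : EuclideanSpace ℝ (Fin N)) 1)
    (v : EuclideanSpace ℝ (Fin N))
    (B : Set (Metric.sphere (0 : EuclideanSpace ℝ (Fin N)) 1)) :
    Measure (Metric.sphere (0 : EuclideanSpace ℝ (Fin N)) 1) :=
  ((‖v‖₊ : ENNReal) * μ B) • Measure.dirac (nrm u₀ v)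

noncomputable def nu2 (μ : Measure (Metric.sphere (0 : EuclideanSpace ℝ (Fin N)) 1))
    (u₀ : Metric.sphere (0 : EuclideanSpace ℝ (Fin N)) 1)
    (v : EuclideanSpace ℝ (Fin N))
    (B : Set (Metric.sphere (0 : EuclideanSpace ℝ (Fin N)) 1)) :
    Measure (Metric.sphere (0 : EuclideanSpace ℝ (Fin N)) 1) :=
  Measure.map (fun u : Metric.sphere (0 : EuclideanSpace ℝ (Fin N)) 1 =>
      nrm u₀ ((u : EuclideanSpace ℝ (Fin N)) - v))
    ((μ.restrict B).withDensity
      (fun u => (‖(u : EuclideanSpace ℝ (Fin N)) - v‖₊ : ENNReal)))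

variable {μ : Measure (Metric.sphere (0 : EuclideanSpace ℝ (Fin N)) 1)}
  [IsFiniteMeasure μ]
  {u₀ : Metric.sphere (0 : EuclideanSpace ℝ (Fin N)) 1}

lemma nu1_finite (v : EuclideanSpace ℝ (Fin N))
    (B : Set (Metric.sphere (0 : EuclideanSpace ℝ (Fin N)) 1)) :
    IsFiniteMeasure (nu1 μ u₀ v B) :=
  isFiniteMeasure_smul_dirac (ENNReal.mul_ne_top ENNReal.coe_ne_top (measure_ne_top μ _)) _

lemma measurable_sub_const (v : EuclideanSpace ℝ (Fin N)) :
    Measurable fun u : Metric.sphere (0 : EuclideanSpace ℝ (Fin N)) 1 =>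
      (u : EuclideanSpace ℝ (Fin N)) - v :=
  (continuous_subtype_val.sub continuous_const).measurable

lemma lintegral_nnnorm_sub_ne_top
    (v : EuclideanSpace ℝ (Fin N))
    (B : Set (Metric.sphere (0 : EuclideanSpace ℝ (Fin N)) 1)) :
    ∫⁻ u, (‖(u : EuclideanSpace ℝ (Fin N)) - v‖₊ : ENNReal) ∂(μ.restrict B) ≠ ⊤ := by
  have hbound : ∀ u : Metric.sphere (0 : EuclideanSpace ℝ (Fin N)) 1,
      (‖(u : EuclideanSpace ℝ (Fin N)) - v‖₊ : ENNReal) ≤ ((1 : NNReal) + ‖v‖₊ : ENNReal) := by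
    intro u
    have h1 : ‖(u : EuclideanSpace ℝ (Fin N))‖ = 1 := mem_sphere_zero_iff_norm.mp u.2
    have h2 : ‖(u : EuclideanSpace ℝ (Fin N)) - v‖ ≤ 1 + ‖v‖ := by
      calc ‖(u : EuclideanSpace ℝ (Fin N)) - v‖
          ≤ ‖(u : EuclideanSpace ℝ (Fin N))‖ + ‖v‖ := norm_sub_le _ _
        _ = 1 + ‖v‖ := by rw [h1]
    have h3 : ‖(u : EuclideanSpace ℝ (Fin N)) - v‖₊ ≤ (1 : NNReal) + ‖v‖₊ := by
      rw [← NNReal.coe_le_coe]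
      push_cast
      exact h2
    exact_mod_cast ENNReal.coe_le_coe.mpr h3
  have := MeasureTheory.lintegral_mono (μ := μ.restrict B) hbound
  refine ne_top_of_le_ne_top ?_ this
  rw [lintegral_const]
  exact ENNReal.mul_ne_top ENNReal.coe_ne_top (measure_ne_top _ _)

lemma nu2_finite (v : EuclideanSpace ℝ (Fin N))
    (B : Set (Metric.sphere (0 : EuclideanSpace ℝ (Fin N)) 1)) :
    IsFiniteMeasure (nu2 μ u₀ v B) := by
  haveI : IsFiniteMeasure ((μ.restrict B).withDensity
      (fun u => (‖(u : EuclideanSpace ℝ (Fin N)) - v‖₊ : ENNReal))) :=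
    isFiniteMeasure_withDensity (lintegral_nnnorm_sub_ne_top v B)
  unfold nu2
  exact inferInstance

lemma nu1_integral {f : EuclideanSpace ℝ (Fin N) → ℝ}
    (hom : ∀ (c : ℝ), 0 ≤ c → ∀ x, f (c • x) = c * f x)
    (v : EuclideanSpace ℝ (Fin N))
    (B : Set (Metric.sphere (0 : EuclideanSpace ℝ (Fin N)) 1)) :
    ∫ w, f (w : EuclideanSpace ℝ (Fin N)) ∂(nu1 μ u₀ v B)
      = (μ B).toReal * f v := by
  rw [nu1, integral_smul_dirac, ENNReal.toReal_mul, ENNReal.coe_toReal, coe_nnnorm]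
  rw [mul_comm ‖v‖ _, mul_assoc, hom_nrm hom u₀ v]

lemma nu2_integral {f : EuclideanSpace ℝ (Fin N) → ℝ} (hf : Continuous f)
    (hom : ∀ (c : ℝ), 0 ≤ c → ∀ x, f (c • x) = c * f x)
    (v : EuclideanSpace ℝ (Fin N))
    (B : Set (Metric.sphere (0 : EuclideanSpace ℝ (Fin N)) 1)) :
    ∫ w, f (w : EuclideanSpace ℝ (Fin N)) ∂(nu2 μ u₀ v B)
      = ∫ u in B, f ((u : EuclideanSpace ℝ (Fin N)) - v) ∂μ :=
  integral_pushNrm u₀ (μ.restrict B) _ (measurable_sub_const v) hf hom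

lemma nu1_sum {m : ℕ} (v : EuclideanSpace ℝ (Fin N))
    {C : Fin m → Set (Metric.sphere (0 : EuclideanSpace ℝ (Fin N)) 1)}
    (hCd : Pairwise (Function.onFun Disjoint C)) (hCm : ∀ k, MeasurableSet (C k)) :
    ∑ k, nu1 μ u₀ v (C k) = nu1 μ u₀ v (⋃ k, C k) := by
  simp only [nu1]
  rw [← Finset.sum_smul]
  congr 1
  rw [← Finset.mul_sum]
  congr 1
  rw [measure_iUnion hCd hCm, tsum_fintype]

lemma nu2_sum {m : ℕ} (v : EuclideanSpace ℝ (Fin N))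
    {C : Fin m → Set (Metric.sphere (0 : EuclideanSpace ℝ (Fin N)) 1)}
    (hCd : Pairwise (Function.onFun Disjoint C)) (hCm : ∀ k, MeasurableSet (C k)) :
    ∑ k, nu2 μ u₀ v (C k) = nu2 μ u₀ v (⋃ k, C k) := by
  have hφ : Measurable fun u : Metric.sphere (0 : EuclideanSpace ℝ (Fin N)) 1 =>
      nrm u₀ ((u : EuclideanSpace ℝ (Fin N)) - v) :=
    (measurable_nrm u₀).comp (measurable_sub_const v)
  simp only [nu2]
  rw [Measure.restrict_iUnion hCd hCm, withDensity_sum,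
    Measure.map_sum hφ.aemeasurable, Measure.sum_fintype]

lemma isFiniteMeasure_finset_sum {X : Type*} [MeasurableSpace X] {ι : Type*}
    (s : Finset ι) (ρ : ι → Measure X) (h : ∀ i ∈ s, IsFiniteMeasure (ρ i)) :
    IsFiniteMeasure (∑ i ∈ s, ρ i) := by
  constructor
  rw [Measure.finset_sum_apply]
  refine ENNReal.sum_lt_top.mpr fun i hi => ?_
  haveI := h i hi
  exact measure_lt_top _ _

end SuppAux
namespace SuppAux

variable {N : ℕ}

lemma dir1 {S₁ S₂ : Set (EuclideanSpace ℝ (Fin N))}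
    (h₁c : IsCompact S₁) (h₁0 : (0 : EuclideanSpace ℝ (Fin N)) ∈ S₁)
    (h₂c : IsCompact S₂) (h₂0 : (0 : EuclideanSpace ℝ (Fin N)) ∈ S₂)
    (μ : Measure (Metric.sphere (0 : EuclideanSpace ℝ (Fin N)) 1))
    [IsFiniteMeasure μ]
    (μ₁ μ₂ : Measure (Metric.sphere (0 : EuclideanSpace ℝ (Fin N)) 1))
    [IsFiniteMeasure μ₁] [IsFiniteMeasure μ₂]
    (hmaj : LinMajorizes (μ₁ + μ₂) μ) :
    (∫ u, suppFn (S₁ ∩ S₂) (u : EuclideanSpace ℝ (Fin N)) ∂μ) ≤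
      (∫ u, suppFn S₁ (u : EuclideanSpace ℝ (Fin N)) ∂μ₁) +
      (∫ u, suppFn S₂ (u : EuclideanSpace ℝ (Fin N)) ∂μ₂) := by
  classical
  have h₁ne : S₁.Nonempty := ⟨0, h₁0⟩
  have h₂ne : S₂.Nonempty := ⟨0, h₂0⟩
  have hIc : IsCompact (S₁ ∩ S₂) := h₁c.inter_right h₂c.isClosed
  have hIne : (S₁ ∩ S₂).Nonempty := ⟨0, h₁0, h₂0⟩
  have contI : Continuous fun u : Metric.sphere (0 : EuclideanSpace ℝ (Fin N)) 1 =>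
      suppFn (S₁ ∩ S₂) (u : EuclideanSpace ℝ (Fin N)) :=
    (continuous_suppFn hIc hIne).comp continuous_subtype_val
  have cont1 : Continuous fun u : Metric.sphere (0 : EuclideanSpace ℝ (Fin N)) 1 =>
      suppFn S₁ (u : EuclideanSpace ℝ (Fin N)) :=
    (continuous_suppFn h₁c h₁ne).comp continuous_subtype_val
  have cont2 : Continuous fun u : Metric.sphere (0 : EuclideanSpace ℝ (Fin N)) 1 =>
      suppFn S₂ (u : EuclideanSpace ℝ (Fin N)) :=
    (continuous_suppFn h₂c h₂ne).comp continuous_subtype_val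
  set C : ℝ := (μ Set.univ).toReal with hC
  have hC0 : 0 ≤ C := ENNReal.toReal_nonneg
  refine le_of_forall_pos_le_add fun ε hε => ?_
  set ε' : ℝ := ε / (C + 1) with hε'
  have hε'0 : 0 < ε' := by positivity
  -- covering of the sphere
  have hcover : ∀ x : Metric.sphere (0 : EuclideanSpace ℝ (Fin N)) 1,
      ∃ W, IsOpen W ∧ x ∈ W ∧
        (∃ y ∈ S₁ ∩ S₂, ∀ u ∈ W,
          suppFn (S₁ ∩ S₂) (u : EuclideanSpace ℝ (Fin N)) ≤
            (⟪(u : EuclideanSpace ℝ (Fin N)), y⟫ : ℝ) + ε') := by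
    intro x
    obtain ⟨y₀, hy₀mem, hy₀max⟩ := hIc.exists_isMaxOn hIne
      ((continuous_const.inner continuous_id).continuousOn
        (s := S₁ ∩ S₂) (f := fun y => (⟪(x : EuclideanSpace ℝ (Fin N)), y⟫ : ℝ)))
    have hx : suppFn (S₁ ∩ S₂) (x : EuclideanSpace ℝ (Fin N)) ≤
        (⟪(x : EuclideanSpace ℝ (Fin N)), y₀⟫ : ℝ) :=
      suppFn_le_s18 hIne fun y hy => hy₀max hy
    refine ⟨{u : Metric.sphere (0 : EuclideanSpace ℝ (Fin N)) 1 |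
        suppFn (S₁ ∩ S₂) (u : EuclideanSpace ℝ (Fin N)) <
          (⟪(u : EuclideanSpace ℝ (Fin N)), y₀⟫ : ℝ) + ε'}, ?_, ?_,
      y₀, hy₀mem, fun u hu => le_of_lt hu⟩
    · exact isOpen_lt contI
        ((continuous_subtype_val.inner continuous_const).add continuous_const)
    · show suppFn (S₁ ∩ S₂) (x : EuclideanSpace ℝ (Fin N)) <
        (⟪(x : EuclideanSpace ℝ (Fin N)), y₀⟫ : ℝ) + ε'
      linarith
  obtain ⟨m, U, hUm, hUd, hUu, hUy⟩ := exists_finite_partition _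
    (fun A B hAB h => by
      obtain ⟨y, hy, hb⟩ := h
      exact ⟨y, hy, fun u hu => hb u (hAB hu)⟩) hcover
  choose y hymem hybound using hUy
  obtain ⟨μs, hμsfin, hμssum, hμsmom⟩ := hmaj m U hUm hUd hUu
  haveI : ∀ k, IsFiniteMeasure (μs k) := hμsfin
  -- step 1 : split the μ-integral along the partition
  have step1 : (∫ u, suppFn (S₁ ∩ S₂) (u : EuclideanSpace ℝ (Fin N)) ∂μ)
      = ∑ k, ∫ u in U k, suppFn (S₁ ∩ S₂) (u : EuclideanSpace ℝ (Fin N)) ∂μ := by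
    conv_lhs => rw [← sum_restrict μ hUm hUd hUu]
    exact integral_finset_sum_measure
      (fun k _ => (integrable_cont contI μ).restrict)
  -- step 2 : bound each piece
  have step2 : ∀ k, (∫ u in U k, suppFn (S₁ ∩ S₂) (u : EuclideanSpace ℝ (Fin N)) ∂μ)
      ≤ (∫ w, (⟪y k, (w : EuclideanSpace ℝ (Fin N))⟫ : ℝ) ∂(μs k))
        + ε' * (μ (U k)).toReal := by
    intro k
    have hconty : Continuous fun u : Metric.sphere (0 : EuclideanSpace ℝ (Fin N)) 1 =>
        (⟪y k, (u : EuclideanSpace ℝ (Fin N))⟫ : ℝ) :=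
      continuous_const.inner continuous_subtype_val
    have hb : (∫ u in U k, suppFn (S₁ ∩ S₂) (u : EuclideanSpace ℝ (Fin N)) ∂μ)
        ≤ ∫ u in U k, ((⟪y k, (u : EuclideanSpace ℝ (Fin N))⟫ : ℝ) + ε') ∂μ := by
      refine setIntegral_mono_on
        ((integrable_cont contI μ).integrableOn)
        (((integrable_cont hconty μ).add (integrable_const ε')).integrableOn)
        (hUm k) fun u hu => ?_
      have := hybound k u hu
      rw [real_inner_comm] at this
      linarith
    have hsplit : (∫ u in U k, ((⟪y k, (u : EuclideanSpace ℝ (Fin N))⟫ : ℝ) + ε') ∂μ)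
        = (∫ u in U k, (⟪y k, (u : EuclideanSpace ℝ (Fin N))⟫ : ℝ) ∂μ)
          + ε' * (μ (U k)).toReal := by
      rw [integral_add ((integrable_cont hconty μ).restrict) (integrable_const ε'),
        setIntegral_const, smul_eq_mul, mul_comm]
      rfl
    rw [hμsmom k (y k)]
    linarith [hb, hsplit.le, hsplit.ge]
  -- step 3 : replace the linear integrand by the support function
  have step3 : ∀ k, (∫ w, (⟪y k, (w : EuclideanSpace ℝ (Fin N))⟫ : ℝ) ∂(μs k))
      ≤ ∫ w, suppFn (S₁ ∩ S₂) (w : EuclideanSpace ℝ (Fin N)) ∂(μs k) := by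
    intro k
    have hconty : Continuous fun u : Metric.sphere (0 : EuclideanSpace ℝ (Fin N)) 1 =>
        (⟪y k, (u : EuclideanSpace ℝ (Fin N))⟫ : ℝ) :=
      continuous_const.inner continuous_subtype_val
    refine integral_mono (integrable_cont hconty (μs k))
      (integrable_cont contI (μs k)) fun w => ?_
    rw [real_inner_comm]
    exact inner_le_suppFn hIc (hymem k) _
  -- step 4 : reassemble
  have step4 : ∑ k, (∫ w, suppFn (S₁ ∩ S₂) (w : EuclideanSpace ℝ (Fin N)) ∂(μs k))
      = (∫ w, suppFn (S₁ ∩ S₂) (w : EuclideanSpace ℝ (Fin N)) ∂μ₁)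
        + ∫ w, suppFn (S₁ ∩ S₂) (w : EuclideanSpace ℝ (Fin N)) ∂μ₂ := by
    rw [← integral_finset_sum_measure (fun k _ => integrable_cont contI (μs k)),
      hμssum, integral_add_measure (integrable_cont contI μ₁)
        (integrable_cont contI μ₂)]
  have step5 : (∫ w, suppFn (S₁ ∩ S₂) (w : EuclideanSpace ℝ (Fin N)) ∂μ₁)
      ≤ ∫ w, suppFn S₁ (w : EuclideanSpace ℝ (Fin N)) ∂μ₁ := by
    refine integral_mono (integrable_cont contI μ₁) (integrable_cont cont1 μ₁)
      fun w => ?_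
    exact suppFn_le_s18 hIne fun z hz => inner_le_suppFn h₁c hz.1 _
  have step6 : (∫ w, suppFn (S₁ ∩ S₂) (w : EuclideanSpace ℝ (Fin N)) ∂μ₂)
      ≤ ∫ w, suppFn S₂ (w : EuclideanSpace ℝ (Fin N)) ∂μ₂ := by
    refine integral_mono (integrable_cont contI μ₂) (integrable_cont cont2 μ₂)
      fun w => ?_
    exact suppFn_le_s18 hIne fun z hz => inner_le_suppFn h₂c hz.2 _
  have hmeasum : ∑ k, (μ (U k)).toReal = C := by
    have h1 : μ Set.univ = ∑ k, μ (U k) := by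
      rw [← hUu, measure_iUnion hUd hUm, tsum_fintype]
    rw [hC, h1, ENNReal.toReal_sum (fun k _ => measure_ne_top μ _)]
  have hεC : ε' * C ≤ ε := by
    rw [hε', div_mul_eq_mul_div, div_le_iff₀ (by positivity : (0:ℝ) < C + 1)]
    nlinarith
  calc (∫ u, suppFn (S₁ ∩ S₂) (u : EuclideanSpace ℝ (Fin N)) ∂μ)
      = ∑ k, ∫ u in U k, suppFn (S₁ ∩ S₂) (u : EuclideanSpace ℝ (Fin N)) ∂μ := step1
    _ ≤ ∑ k, ((∫ w, (⟪y k, (w : EuclideanSpace ℝ (Fin N))⟫ : ℝ) ∂(μs k))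
          + ε' * (μ (U k)).toReal) := Finset.sum_le_sum fun k _ => step2 k
    _ = (∑ k, ∫ w, (⟪y k, (w : EuclideanSpace ℝ (Fin N))⟫ : ℝ) ∂(μs k))
          + ε' * ∑ k, (μ (U k)).toReal := by
        rw [Finset.sum_add_distrib, ← Finset.mul_sum]
    _ ≤ (∑ k, ∫ w, suppFn (S₁ ∩ S₂) (w : EuclideanSpace ℝ (Fin N)) ∂(μs k))
          + ε' * C := by
        rw [hmeasum]
        exact add_le_add (Finset.sum_le_sum fun k _ => step3 k) le_rfl
    _ = ((∫ w, suppFn (S₁ ∩ S₂) (w : EuclideanSpace ℝ (Fin N)) ∂μ₁)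
          + ∫ w, suppFn (S₁ ∩ S₂) (w : EuclideanSpace ℝ (Fin N)) ∂μ₂) + ε' * C := by
        rw [step4]
    _ ≤ ((∫ w, suppFn S₁ (w : EuclideanSpace ℝ (Fin N)) ∂μ₁)
          + ∫ w, suppFn S₂ (w : EuclideanSpace ℝ (Fin N)) ∂μ₂) + ε' * C := by
        have := add_le_add step5 step6
        linarith
    _ ≤ ((∫ w, suppFn S₁ (w : EuclideanSpace ℝ (Fin N)) ∂μ₁)
          + ∫ w, suppFn S₂ (w : EuclideanSpace ℝ (Fin N)) ∂μ₂) + ε := by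
        linarith

end SuppAux
namespace SuppAux

variable {N : ℕ}

lemma dir2 {S₁ S₂ : Set (EuclideanSpace ℝ (Fin N))}
    (h₁c : IsCompact S₁) (h₁conv : Convex ℝ S₁)
    (h₁0 : (0 : EuclideanSpace ℝ (Fin N)) ∈ S₁)
    (h₂c : IsCompact S₂) (h₂conv : Convex ℝ S₂)
    (h₂0 : (0 : EuclideanSpace ℝ (Fin N)) ∈ S₂)
    (μ : Measure (Metric.sphere (0 : EuclideanSpace ℝ (Fin N)) 1))
    [IsFiniteMeasure μ] {ε : ℝ} (hε : 0 < ε) :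
    ∃ μ₁ μ₂ : Measure (Metric.sphere (0 : EuclideanSpace ℝ (Fin N)) 1),
      IsFiniteMeasure μ₁ ∧ IsFiniteMeasure μ₂ ∧ LinMajorizes (μ₁ + μ₂) μ ∧
      (∫ u, suppFn S₁ (u : EuclideanSpace ℝ (Fin N)) ∂μ₁)
        + (∫ u, suppFn S₂ (u : EuclideanSpace ℝ (Fin N)) ∂μ₂)
        ≤ (∫ u, suppFn (S₁ ∩ S₂) (u : EuclideanSpace ℝ (Fin N)) ∂μ) + ε := by
  classical
  have h₁ne : S₁.Nonempty := ⟨0, h₁0⟩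
  have h₂ne : S₂.Nonempty := ⟨0, h₂0⟩
  have hIc : IsCompact (S₁ ∩ S₂) := h₁c.inter_right h₂c.isClosed
  have hIne : (S₁ ∩ S₂).Nonempty := ⟨0, h₁0, h₂0⟩
  have contI : Continuous fun u : Metric.sphere (0 : EuclideanSpace ℝ (Fin N)) 1 =>
      suppFn (S₁ ∩ S₂) (u : EuclideanSpace ℝ (Fin N)) :=
    (continuous_suppFn hIc hIne).comp continuous_subtype_val
  have hom1 : ∀ (c : ℝ), 0 ≤ c → ∀ x, suppFn S₁ (c • x) = c * suppFn S₁ x :=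
    fun c hc x => suppFn_smul h₁c h₁ne hc x
  have hom2 : ∀ (c : ℝ), 0 ≤ c → ∀ x, suppFn S₂ (c • x) = c * suppFn S₂ x :=
    fun c hc x => suppFn_smul h₂c h₂ne hc x
  cases isEmpty_or_nonempty (Metric.sphere (0 : EuclideanSpace ℝ (Fin N)) 1) with
  | inl hempty =>
    have hμ0 : μ = 0 := μ.eq_zero_of_isEmpty
    refine ⟨0, 0, inferInstance, inferInstance, ?_, ?_⟩
    · intro m U hUm hUd hUu
      refine ⟨fun _ => 0, fun _ => inferInstance, by simp, fun k l => by simp [hμ0]⟩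
    · simp [hμ0, hε.le]
  | inr hne =>
    obtain ⟨u₀⟩ := hne
    set C : ℝ := (μ Set.univ).toReal with hC
    have hC0 : 0 ≤ C := ENNReal.toReal_nonneg
    set ε' : ℝ := ε / (C + 1) with hε'
    have hε'0 : 0 < ε' := by positivity
    have hεC : ε' * C ≤ ε := by
      rw [hε', div_mul_eq_mul_div, div_le_iff₀ (by positivity : (0:ℝ) < C + 1)]
      nlinarith
    -- covering of the sphere by near-optimal decompositions
    have hcover : ∀ x : Metric.sphere (0 : EuclideanSpace ℝ (Fin N)) 1,
        ∃ W, IsOpen W ∧ x ∈ W ∧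
          (∃ w : EuclideanSpace ℝ (Fin N), ∀ u ∈ W,
            suppFn S₁ w + suppFn S₂ ((u : EuclideanSpace ℝ (Fin N)) - w)
              ≤ suppFn (S₁ ∩ S₂) (u : EuclideanSpace ℝ (Fin N)) + ε') := by
      intro x
      obtain ⟨w, hw⟩ := exists_infconv h₁c h₁conv h₁0 h₂c h₂conv h₂0
        (x : EuclideanSpace ℝ (Fin N)) (half_pos hε'0)
      refine ⟨{u : Metric.sphere (0 : EuclideanSpace ℝ (Fin N)) 1 |
          suppFn S₁ w + suppFn S₂ ((u : EuclideanSpace ℝ (Fin N)) - w)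
            < suppFn (S₁ ∩ S₂) (u : EuclideanSpace ℝ (Fin N)) + ε'}, ?_, ?_,
        w, fun u hu => le_of_lt hu⟩
      · refine isOpen_lt (continuous_const.add ?_) (contI.add continuous_const)
        exact (continuous_suppFn h₂c h₂ne).comp
          (continuous_subtype_val.sub continuous_const)
      · show suppFn S₁ w + suppFn S₂ ((x : EuclideanSpace ℝ (Fin N)) - w)
            < suppFn (S₁ ∩ S₂) (x : EuclideanSpace ℝ (Fin N)) + ε'
        linarith
    obtain ⟨n, V, hVm, hVd, hVu, hVv⟩ := exists_finite_partition _
      (fun A B hAB h => by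
        obtain ⟨w, hb⟩ := h
        exact ⟨w, fun u hu => hb u (hAB hu)⟩) hcover
    choose v hvbound using hVv
    -- the two measures
    refine ⟨∑ j, nu1 μ u₀ (v j) (V j), ∑ j, nu2 μ u₀ (v j) (V j),
      isFiniteMeasure_finset_sum _ _ (fun j _ => nu1_finite (v j) (V j)),
      isFiniteMeasure_finset_sum _ _ (fun j _ => nu2_finite (v j) (V j)),
      ?_, ?_⟩
    · -- linear majorization
      intro m U hUm hUd hUu
      refine ⟨fun k => ∑ j, (nu1 μ u₀ (v j) (V j ∩ U k) + nu2 μ u₀ (v j) (V j ∩ U k)),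
        ?_, ?_, ?_⟩
      · intro k
        refine isFiniteMeasure_finset_sum _ _ (fun j _ => ?_)
        haveI := nu1_finite (μ := μ) (u₀ := u₀) (v j) (V j ∩ U k)
        haveI := nu2_finite (μ := μ) (u₀ := u₀) (v j) (V j ∩ U k)
        infer_instance
      · -- the pieces sum to μ₁ + μ₂
        have hinter : ∀ j : Fin n, (⋃ k, V j ∩ U k) = V j := by
          intro j
          rw [← Set.inter_iUnion, hUu, Set.inter_univ]
        have hd : ∀ j : Fin n,
            Pairwise (Function.onFun Disjoint fun k => V j ∩ U k) := by
          intro j a b hab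
          exact (hUd hab).mono Set.inter_subset_right Set.inter_subset_right
        have hm : ∀ (j : Fin n) (k : Fin m), MeasurableSet (V j ∩ U k) :=
          fun j k => (hVm j).inter (hUm k)
        have h1 : ∀ j : Fin n, ∑ k, nu1 μ u₀ (v j) (V j ∩ U k)
            = nu1 μ u₀ (v j) (V j) := by
          intro j
          rw [nu1_sum (v j) (hd j) (hm j), hinter j]
        have h2 : ∀ j : Fin n, ∑ k, nu2 μ u₀ (v j) (V j ∩ U k)
            = nu2 μ u₀ (v j) (V j) := by
          intro j
          rw [nu2_sum (v j) (hd j) (hm j), hinter j]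
        calc ∑ k, ∑ j, (nu1 μ u₀ (v j) (V j ∩ U k) + nu2 μ u₀ (v j) (V j ∩ U k))
            = ∑ j, ∑ k, (nu1 μ u₀ (v j) (V j ∩ U k) + nu2 μ u₀ (v j) (V j ∩ U k)) :=
              Finset.sum_comm
          _ = ∑ j, ((∑ k, nu1 μ u₀ (v j) (V j ∩ U k))
                + ∑ k, nu2 μ u₀ (v j) (V j ∩ U k)) := by
              refine Finset.sum_congr rfl fun j _ => ?_
              rw [Finset.sum_add_distrib]
          _ = ∑ j, (nu1 μ u₀ (v j) (V j) + nu2 μ u₀ (v j) (V j)) := by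
              refine Finset.sum_congr rfl fun j _ => ?_
              rw [h1 j, h2 j]
          _ = (∑ j, nu1 μ u₀ (v j) (V j)) + ∑ j, nu2 μ u₀ (v j) (V j) :=
              Finset.sum_add_distrib
      · -- the moment identities
        intro k l
        have homl : ∀ (c : ℝ), 0 ≤ c → ∀ x : EuclideanSpace ℝ (Fin N),
            (⟪l, c • x⟫ : ℝ) = c * ⟪l, x⟫ := fun c _ x => real_inner_smul_right l x c
        have contl : Continuous fun x : EuclideanSpace ℝ (Fin N) => (⟪l, x⟫ : ℝ) :=
          continuous_const.inner continuous_id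
        have contl' : Continuous fun u : Metric.sphere (0 : EuclideanSpace ℝ (Fin N)) 1 =>
            (⟪l, (u : EuclideanSpace ℝ (Fin N))⟫ : ℝ) :=
          contl.comp continuous_subtype_val
        have hint : ∀ j : Fin n, Integrable
            (fun u : Metric.sphere (0 : EuclideanSpace ℝ (Fin N)) 1 =>
              (⟪l, (u : EuclideanSpace ℝ (Fin N))⟫ : ℝ))
            (nu1 μ u₀ (v j) (V j ∩ U k) + nu2 μ u₀ (v j) (V j ∩ U k)) := by
          intro j
          haveI := nu1_finite (μ := μ) (u₀ := u₀) (v j) (V j ∩ U k)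
          haveI := nu2_finite (μ := μ) (u₀ := u₀) (v j) (V j ∩ U k)
          exact integrable_cont contl' _
        rw [integral_finset_sum_measure (fun j _ => hint j)]
        have hjterm : ∀ j : Fin n,
            (∫ w, (⟪l, (w : EuclideanSpace ℝ (Fin N))⟫ : ℝ)
              ∂(nu1 μ u₀ (v j) (V j ∩ U k) + nu2 μ u₀ (v j) (V j ∩ U k)))
            = ∫ u in V j ∩ U k, (⟪l, (u : EuclideanSpace ℝ (Fin N))⟫ : ℝ) ∂μ := by
          intro j
          haveI := nu1_finite (μ := μ) (u₀ := u₀) (v j) (V j ∩ U k)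
          haveI := nu2_finite (μ := μ) (u₀ := u₀) (v j) (V j ∩ U k)
          rw [integral_add_measure (integrable_cont contl' _) (integrable_cont contl' _),
            nu1_integral homl, nu2_integral contl homl]
          have hpt : ∀ u : Metric.sphere (0 : EuclideanSpace ℝ (Fin N)) 1,
              (⟪l, (u : EuclideanSpace ℝ (Fin N))⟫ : ℝ)
                = ⟪l, v j⟫ + ⟪l, (u : EuclideanSpace ℝ (Fin N)) - v j⟫ := by
            intro u
            rw [← inner_add_right, add_sub_cancel]
          have hintc : Integrable
              (fun u : Metric.sphere (0 : EuclideanSpace ℝ (Fin N)) 1 =>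
                (⟪l, (u : EuclideanSpace ℝ (Fin N)) - v j⟫ : ℝ))
              (μ.restrict (V j ∩ U k)) := by
            have hcc : Continuous fun u : Metric.sphere (0 : EuclideanSpace ℝ (Fin N)) 1 =>
                (⟪l, (u : EuclideanSpace ℝ (Fin N)) - v j⟫ : ℝ) :=
              contl.comp (continuous_subtype_val.sub continuous_const)
            exact (integrable_cont hcc μ).restrict
          have e1 : (∫ u in V j ∩ U k, ((⟪l, v j⟫ : ℝ)
                + ⟪l, (u : EuclideanSpace ℝ (Fin N)) - v j⟫) ∂μ)
              = (∫ _u in V j ∩ U k, (⟪l, v j⟫ : ℝ) ∂μ)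
                + ∫ u in V j ∩ U k, (⟪l, (u : EuclideanSpace ℝ (Fin N)) - v j⟫ : ℝ) ∂μ :=
            integral_add (integrable_const _) hintc
          have e0 : (∫ u in V j ∩ U k, (⟪l, (u : EuclideanSpace ℝ (Fin N))⟫ : ℝ) ∂μ)
              = ∫ u in V j ∩ U k, ((⟪l, v j⟫ : ℝ)
                + ⟪l, (u : EuclideanSpace ℝ (Fin N)) - v j⟫) ∂μ :=
            integral_congr_ae (Filter.Eventually.of_forall fun u => hpt u)
          rw [e0, e1, setIntegral_const, smul_eq_mul]
          rfl
        rw [Finset.sum_congr rfl (fun j _ => hjterm j)]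
        have hunion : (⋃ j ∈ (Finset.univ : Finset (Fin n)), (V j ∩ U k)) = U k := by
          rw [show (⋃ j ∈ (Finset.univ : Finset (Fin n)), (V j ∩ U k))
              = ⋃ j, (V j ∩ U k) from by simp]
          rw [← Set.iUnion_inter, hVu, Set.univ_inter]
        have hbi := integral_biUnion_finset (μ := μ)
          (f := fun u : Metric.sphere (0 : EuclideanSpace ℝ (Fin N)) 1 =>
            (⟪l, (u : EuclideanSpace ℝ (Fin N))⟫ : ℝ)) Finset.univ
          (fun j _ => (hVm j).inter (hUm k))
          (fun a _ b _ hab => (hVd hab).mono Set.inter_subset_left Set.inter_subset_left)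
          (fun j _ => (integrable_cont contl' μ).integrableOn)
        rw [hunion] at hbi
        exact hbi.symm
    · -- the value estimate
      have hval1 : (∫ u, suppFn S₁ (u : EuclideanSpace ℝ (Fin N))
            ∂(∑ j, nu1 μ u₀ (v j) (V j)))
          = ∑ j, (μ (V j)).toReal * suppFn S₁ (v j) := by
        rw [integral_finset_sum_measure (fun j _ => by
          haveI := nu1_finite (μ := μ) (u₀ := u₀) (v j) (V j)
          exact integrable_cont ((continuous_suppFn h₁c h₁ne).comp
            continuous_subtype_val) _)]
        exact Finset.sum_congr rfl fun j _ => nu1_integral hom1 (v j) (V j)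
      have hval2 : (∫ u, suppFn S₂ (u : EuclideanSpace ℝ (Fin N))
            ∂(∑ j, nu2 μ u₀ (v j) (V j)))
          = ∑ j, ∫ u in V j, suppFn S₂ ((u : EuclideanSpace ℝ (Fin N)) - v j) ∂μ := by
        rw [integral_finset_sum_measure (fun j _ => by
          haveI := nu2_finite (μ := μ) (u₀ := u₀) (v j) (V j)
          exact integrable_cont ((continuous_suppFn h₂c h₂ne).comp
            continuous_subtype_val) _)]
        exact Finset.sum_congr rfl fun j _ =>
          nu2_integral (continuous_suppFn h₂c h₂ne) hom2 (v j) (V j)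
      rw [hval1, hval2, ← Finset.sum_add_distrib]
      have hjbound : ∀ j : Fin n,
          (μ (V j)).toReal * suppFn S₁ (v j)
            + (∫ u in V j, suppFn S₂ ((u : EuclideanSpace ℝ (Fin N)) - v j) ∂μ)
          ≤ (∫ u in V j, suppFn (S₁ ∩ S₂) (u : EuclideanSpace ℝ (Fin N)) ∂μ)
            + ε' * (μ (V j)).toReal := by
        intro j
        have hcont2j : Continuous fun u : Metric.sphere (0 : EuclideanSpace ℝ (Fin N)) 1 =>
            suppFn S₂ ((u : EuclideanSpace ℝ (Fin N)) - v j) :=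
          (continuous_suppFn h₂c h₂ne).comp (continuous_subtype_val.sub continuous_const)
        have hconst : (μ (V j)).toReal * suppFn S₁ (v j)
            = ∫ _u in V j, suppFn S₁ (v j) ∂μ := by
          rw [setIntegral_const, smul_eq_mul]
          rfl
        have e1 : (∫ u in V j, (suppFn S₁ (v j)
              + suppFn S₂ ((u : EuclideanSpace ℝ (Fin N)) - v j)) ∂μ)
            = (∫ _u in V j, suppFn S₁ (v j) ∂μ)
              + ∫ u in V j, suppFn S₂ ((u : EuclideanSpace ℝ (Fin N)) - v j) ∂μ :=
          integral_add (integrable_const _) ((integrable_cont hcont2j μ).restrict)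
        have hmono : (∫ u in V j, (suppFn S₁ (v j)
              + suppFn S₂ ((u : EuclideanSpace ℝ (Fin N)) - v j)) ∂μ)
            ≤ ∫ u in V j, (suppFn (S₁ ∩ S₂) (u : EuclideanSpace ℝ (Fin N)) + ε') ∂μ := by
          refine setIntegral_mono_on
            (((integrable_const _).add (integrable_cont hcont2j μ)).integrableOn)
            (((integrable_cont contI μ).add (integrable_const _)).integrableOn)
            (hVm j) fun u hu => hvbound j u hu
        have hsplit2 : (∫ u in V j, (suppFn (S₁ ∩ S₂) (u : EuclideanSpace ℝ (Fin N)) + ε') ∂μ)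
            = (∫ u in V j, suppFn (S₁ ∩ S₂) (u : EuclideanSpace ℝ (Fin N)) ∂μ)
              + ε' * (μ (V j)).toReal := by
          rw [integral_add ((integrable_cont contI μ).restrict) (integrable_const _),
            setIntegral_const, smul_eq_mul, mul_comm]
          rfl
        linarith [hconst, e1, hmono, hsplit2.le, hsplit2.ge]
      have hsum1 : ∑ j, (∫ u in V j, suppFn (S₁ ∩ S₂) (u : EuclideanSpace ℝ (Fin N)) ∂μ)
          = ∫ u, suppFn (S₁ ∩ S₂) (u : EuclideanSpace ℝ (Fin N)) ∂μ := by
        conv_rhs => rw [← sum_restrict μ hVm hVd hVu]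
        exact (integral_finset_sum_measure
          (fun j _ => (integrable_cont contI μ).restrict)).symm
      have hsum2 : ∑ j, (μ (V j)).toReal = C := by
        have h1 : μ Set.univ = ∑ j, μ (V j) := by
          rw [← hVu, measure_iUnion hVd hVm, tsum_fintype]
        rw [hC, h1, ENNReal.toReal_sum (fun j _ => measure_ne_top μ _)]
      calc ∑ j, ((μ (V j)).toReal * suppFn S₁ (v j)
              + ∫ u in V j, suppFn S₂ ((u : EuclideanSpace ℝ (Fin N)) - v j) ∂μ)
          ≤ ∑ j, ((∫ u in V j, suppFn (S₁ ∩ S₂) (u : EuclideanSpace ℝ (Fin N)) ∂μ)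
              + ε' * (μ (V j)).toReal) := Finset.sum_le_sum fun j _ => hjbound j
        _ = (∑ j, ∫ u in V j, suppFn (S₁ ∩ S₂) (u : EuclideanSpace ℝ (Fin N)) ∂μ)
              + ε' * ∑ j, (μ (V j)).toReal := by
            rw [Finset.sum_add_distrib, ← Finset.mul_sum]
        _ = (∫ u, suppFn (S₁ ∩ S₂) (u : EuclideanSpace ℝ (Fin N)) ∂μ) + ε' * C := by
            rw [hsum1, hsum2]
        _ ≤ (∫ u, suppFn (S₁ ∩ S₂) (u : EuclideanSpace ℝ (Fin N)) ∂μ) + ε := by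
            linarith

end SuppAux

/-- **(5.4.1).**  For gauges `S₁, S₂` in `ℝ^N` and a finite positive Borel
measure `μ` on the unit sphere,
`∫ h_{S₁ ∩ S₂} dμ = inf {∫ h_{S₁} dμ₁ + ∫ h_{S₂} dμ₂}`, the infimum being over
all pairs of finite positive Borel measures `μ₁, μ₂` such that `μ₁ + μ₂`
linearly majorizes `μ`. -/
theorem integral_suppFn_inter_eq_inf {N : ℕ}
    (S₁ S₂ : Set (EuclideanSpace ℝ (Fin N)))
    (h₁c : IsCompact S₁) (h₁conv : Convex ℝ S₁)
    (h₁0 : (0 : EuclideanSpace ℝ (Fin N)) ∈ S₁)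
    (h₂c : IsCompact S₂) (h₂conv : Convex ℝ S₂)
    (h₂0 : (0 : EuclideanSpace ℝ (Fin N)) ∈ S₂)
    (μ : Measure (Metric.sphere (0 : EuclideanSpace ℝ (Fin N)) 1))
    [IsFiniteMeasure μ] :
    (∫ u, suppFn (S₁ ∩ S₂) (u : EuclideanSpace ℝ (Fin N)) ∂μ) =
      sInf {r : ℝ |
        ∃ μ₁ μ₂ : Measure (Metric.sphere (0 : EuclideanSpace ℝ (Fin N)) 1),
          IsFiniteMeasure μ₁ ∧ IsFiniteMeasure μ₂ ∧
          LinMajorizes (μ₁ + μ₂) μ ∧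
          r = (∫ u, suppFn S₁ (u : EuclideanSpace ℝ (Fin N)) ∂μ₁) +
              (∫ u, suppFn S₂ (u : EuclideanSpace ℝ (Fin N)) ∂μ₂)} := by
  classical
  set T : Set ℝ := {r : ℝ |
        ∃ μ₁ μ₂ : Measure (Metric.sphere (0 : EuclideanSpace ℝ (Fin N)) 1),
          IsFiniteMeasure μ₁ ∧ IsFiniteMeasure μ₂ ∧
          LinMajorizes (μ₁ + μ₂) μ ∧
          r = (∫ u, suppFn S₁ (u : EuclideanSpace ℝ (Fin N)) ∂μ₁) +
              (∫ u, suppFn S₂ (u : EuclideanSpace ℝ (Fin N)) ∂μ₂)} with hTdef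
  have hmaj0 : LinMajorizes (μ + 0) μ := by
    intro m U hUm hUd hUu
    refine ⟨fun k => μ.restrict (U k), fun k => inferInstance, ?_, fun k l => rfl⟩
    rw [add_zero]
    exact SuppAux.sum_restrict μ hUm hUd hUu
  have hTne : T.Nonempty := by
    refine ⟨(∫ u, suppFn S₁ (u : EuclideanSpace ℝ (Fin N)) ∂μ) +
        (∫ u, suppFn S₂ (u : EuclideanSpace ℝ (Fin N))
          ∂(0 : Measure (Metric.sphere (0 : EuclideanSpace ℝ (Fin N)) 1))),
      μ, 0, inferInstance, inferInstance, hmaj0, rfl⟩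
  have hbdd : BddBelow T := by
    refine ⟨0, ?_⟩
    rintro r ⟨μ₁, μ₂, h1, h2, hmaj, rfl⟩
    haveI := h1; haveI := h2
    refine add_nonneg (integral_nonneg fun u => ?_) (integral_nonneg fun u => ?_)
    · exact SuppAux.suppFn_nonneg_s18 h₁c h₁0 _
    · exact SuppAux.suppFn_nonneg_s18 h₂c h₂0 _
  refine le_antisymm ?_ ?_
  · refine le_csInf hTne ?_
    rintro r ⟨μ₁, μ₂, h1, h2, hmaj, rfl⟩
    haveI := h1; haveI := h2
    exact SuppAux.dir1 h₁c h₁0 h₂c h₂0 μ μ₁ μ₂ hmaj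
  · refine le_of_forall_pos_le_add fun ε hε => ?_
    obtain ⟨μ₁, μ₂, h1, h2, hmaj, hval⟩ :=
      SuppAux.dir2 h₁c h₁conv h₁0 h₂c h₂conv h₂0 μ hε
    exact le_trans (csInf_le hbdd ⟨μ₁, μ₂, h1, h2, hmaj, rfl⟩) hval
end
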